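/- arXiv:1404.1826 — 3 statements merged into one kernel-verified Lean document; each statement's English description precedes it below -/
import Mathlib

section
/- Let h be analytic and starlike (univalent with h(0)=0 and h(Δ) starlike with respect to 0) on the unit disc Δ, and let g be analytic on Δ with g(0) = 0 and |g'(z)| < |h'(z)| for all z ∈ Δ. Then |g(z)| < |h(z)| for all z ∈ Δ \ {0}. -/
open Metric Set Topology Filter

theorem stmt2 (h g : ℂ → ℂ)
    (hd : DifferentiableOn ℂ h (Metric.ball (0:ℂ) 1))
    (gd : DifferentiableOn ℂ g (Metric.ball (0:ℂ) 1))
    (h0 : h 0 = 0) (g0 : g 0 = 0)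
    (hinj : Set.InjOn h (Metric.ball (0:ℂ) 1))
    (hstar : ∀ w ∈ h '' (Metric.ball (0:ℂ) 1), segment ℝ 0 w ⊆ h '' (Metric.ball (0:ℂ) 1))
    (hsp : ∀ z ∈ Metric.ball (0:ℂ) 1, ‖deriv g z‖ < ‖deriv h z‖) :
    ∀ z ∈ Metric.ball (0:ℂ) 1, z ≠ 0 → ‖g z‖ < ‖h z‖ := by
  intro z hz hz0
  set B : Set ℂ := Metric.ball (0:ℂ) 1 with hB
  have hBo : IsOpen B := isOpen_ball
  have hA : AnalyticOnNhd ℂ h B := hd.analyticOnNhd hBo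
  have gA : AnalyticOnNhd ℂ g B := gd.analyticOnNhd hBo
  have h0B : (0:ℂ) ∈ B := by simp [hB]
  have hne : ∀ x ∈ B, deriv h x ≠ 0 := by
    intro x hx e
    have := hsp x hx
    rw [e, norm_zero] at this
    exact (norm_nonneg _).not_gt this
  set w := h z with hw
  have hwB : w ∈ h '' B := ⟨z, hz, rfl⟩
  have hw0 : w ≠ 0 := by
    intro e
    exact hz0 (hinj hz h0B (by rw [← hw, e, h0]))
  -- the path γ
  set γ : ℝ → ℂ := fun t => Function.invFunOn h B ((t : ℂ) * w) with hγ
  have hseg : ∀ t ∈ Icc (0:ℝ) 1, (t : ℂ) * w ∈ h '' B := by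
    intro t ht
    apply hstar w hwB
    rw [segment_eq_image]
    exact ⟨t, ht, by simp [Complex.real_smul]⟩
  have hγmem : ∀ t ∈ Icc (0:ℝ) 1, γ t ∈ B ∧ h (γ t) = (t : ℂ) * w := by
    intro t ht
    obtain ⟨x, hx, e⟩ := hseg t ht
    exact Function.invFunOn_pos ⟨x, hx, e⟩
  -- key: derivative of g ∘ γ within Icc, and continuity of γ
  have key : ∀ t ∈ Icc (0:ℝ) 1,
      HasDerivWithinAt (fun s => g (γ s))
        (w • (deriv g (γ t) * (deriv h (γ t))⁻¹)) (Icc (0:ℝ) 1) t ∧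
      ContinuousWithinAt γ (Icc (0:ℝ) 1) t := by
    intro t ht
    obtain ⟨hxB, hhx⟩ := hγmem t ht
    set x := γ t with hx
    obtain ⟨p, hp⟩ := hA x hxB
    have hs : HasStrictDerivAt h (deriv h x) x := hp.deriv ▸ hp.hasStrictDerivAt
    obtain ⟨q, hq⟩ := gA x hxB
    have gs : HasStrictDerivAt g (deriv g x) x := hq.deriv ▸ hq.hasStrictDerivAt
    have hx' : deriv h x ≠ 0 := hne x hxB
    have F := hs.hasStrictFDerivAt_equiv hx'
    set ψ : ℂ → ℂ := hs.localInverse h (deriv h x) x hx' with hψ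
    have hψx : ψ (h x) = x := F.localInverse_apply_image
    have ψd : HasStrictDerivAt ψ (deriv h x)⁻¹ (h x) := hs.to_localInverse hx'
    -- u : ℝ → ℂ
    set u : ℝ → ℂ := fun s => (s : ℂ) * w with hu
    have hut : u t = h x := hhx.symm
    have ud : HasDerivAt u w t := by
      have h1 : HasDerivAt (fun s : ℝ => s • w) ((1:ℝ) • w) t := (hasDerivAt_id t).smul_const w
      simpa [hu, Complex.real_smul] using h1
    -- η = g ∘ ψ
    have ηd : HasStrictDerivAt (g ∘ ψ) (deriv g x * (deriv h x)⁻¹) (h x) :=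
      HasStrictDerivAt.comp_of_eq (h x) gs ψd hψx.symm
    have comp : HasDerivAt (fun s => g (ψ (u s)))
        (w • (deriv g x * (deriv h x)⁻¹)) t :=
      ηd.hasDerivAt.scomp_of_eq t ud hut.symm
    -- eventual equality
    have hev : ∀ᶠ y in 𝓝 (h x), h (ψ y) = y := F.eventually_right_inverse
    have hψB : ∀ᶠ y in 𝓝 (h x), ψ y ∈ B :=
      F.localInverse_tendsto (hBo.mem_nhds hxB)
    have huc : Filter.Tendsto u (𝓝 t) (𝓝 (h x)) := by
      rw [← hut]
      exact (ud.continuousAt)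
    have hev2 : ∀ᶠ s in 𝓝 t, h (ψ (u s)) = u s ∧ ψ (u s) ∈ B := huc.eventually (hev.and hψB)
    have heqγ : ∀ᶠ s in 𝓝[Icc (0:ℝ) 1] t, γ s = ψ (u s) := by
      filter_upwards [nhdsWithin_le_nhds hev2, self_mem_nhdsWithin] with s hs hsI
      obtain ⟨hγB, hγh⟩ := hγmem s hsI
      exact hinj hγB hs.2 (hγh.trans hs.1.symm)
    have heqt : γ t = ψ (u t) := by rw [hut, hψx]
    constructor
    · have heq : ∀ᶠ s in 𝓝[Icc (0:ℝ) 1] t, g (γ s) = g (ψ (u s)) := by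
        filter_upwards [heqγ] with s hs; rw [hs]
      exact (comp.hasDerivWithinAt).congr_of_eventuallyEq heq (by rw [heqt])
    · have h1 : ContinuousAt ψ (u t) := by rw [hut]; exact F.localInverse_continuousAt
      have hc : ContinuousWithinAt (fun s => ψ (u s)) (Icc (0:ℝ) 1) t :=
        (h1.comp ud.continuousAt).continuousWithinAt
      exact hc.congr_of_eventuallyEq heqγ heqt
  have hγc : ContinuousOn γ (Icc (0:ℝ) 1) := fun t ht => (key t ht).2
  have hγmaps : MapsTo γ (Icc (0:ℝ) 1) B := fun t ht => (hγmem t ht).1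
  -- the ratio function
  have hcont : ContinuousOn (fun t => ‖deriv g (γ t) * (deriv h (γ t))⁻¹‖) (Icc (0:ℝ) 1) := by
    have hg' : ContinuousOn (deriv g) B := (gA.deriv).continuousOn
    have hh' : ContinuousOn (deriv h) B := (hA.deriv).continuousOn
    apply ContinuousOn.norm
    exact ((hg'.comp hγc hγmaps).mul
      ((hh'.comp hγc hγmaps).inv₀ (fun t ht => hne _ (hγmaps ht))))
  obtain ⟨t₀, ht₀, hmax⟩ := isCompact_Icc.exists_isMaxOn (nonempty_Icc.2 zero_le_one) hcont
  set ρ : ℝ := ‖deriv g (γ t₀) * (deriv h (γ t₀))⁻¹‖ with hρ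
  have hρ1 : ρ < 1 := by
    have hxB := hγmaps ht₀
    have hlt := hsp _ hxB
    have hpos : (0:ℝ) < ‖deriv h (γ t₀)‖ := by
      simpa [norm_pos_iff] using (hne _ hxB)
    rw [hρ, norm_mul, norm_inv]
    rw [← div_eq_mul_inv, div_lt_one hpos]
    exact hlt
  have hρ0 : 0 ≤ ρ := norm_nonneg _
  -- MVT
  have hmvt := Convex.norm_image_sub_le_of_norm_hasDerivWithin_le
    (f := fun s => g (γ s))
    (f' := fun t => w • (deriv g (γ t) * (deriv h (γ t))⁻¹))
    (C := ‖w‖ * ρ)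
    (fun t ht => (key t ht).1)
    (fun t ht => by
      rw [norm_smul]
      exact mul_le_mul_of_nonneg_left (hmax ht) (norm_nonneg w))
    (convex_Icc 0 1) (left_mem_Icc.2 zero_le_one) (right_mem_Icc.2 zero_le_one)
  have hγ1 : γ 1 = z := by
    obtain ⟨hγB, hγh⟩ := hγmem 1 (right_mem_Icc.2 zero_le_one)
    apply hinj hγB hz
    rw [hγh, ← hw]
    simp
  have hγ0 : γ 0 = 0 := by
    obtain ⟨hγB, hγh⟩ := hγmem 0 (left_mem_Icc.2 zero_le_one)
    apply hinj hγB h0B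
    rw [hγh, h0]
    simp
  simp only [hγ1, hγ0, g0, sub_zero] at hmvt
  have hgz : ‖g z‖ ≤ ‖w‖ * ρ := by
    simpa using hmvt
  have hw0' : (0:ℝ) < ‖w‖ := by
    simpa [norm_pos_iff] using hw0
  calc ‖g z‖ = ‖g z‖ := rfl
    _ ≤ ‖w‖ * ρ := hgz
    _ < ‖w‖ * 1 := by exact mul_lt_mul_of_pos_left hρ1 hw0'
    _ = ‖h z‖ := by rw [mul_one, ← hw]
end

section
/- Let f = h + conj(g) ∈ Ľ_H^α. Then for all z ∈ Δ with |z| < α, |g'(z)| ≥ (α - |z|)(1 - |z|) / ((1 - α|z|)(1 + |z|)³). -/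
open Metric Set Complex Filter Topology

private lemma mobius_normsq (a w : ℂ) :
    Complex.normSq (1 - (starRingEnd ℂ) a * w) - Complex.normSq (a - w)
      = (1 - Complex.normSq a) * (1 - Complex.normSq w) := by
  have e1 : ((Complex.normSq (1 - (starRingEnd ℂ) a * w) : ℂ)) - (Complex.normSq (a - w) : ℂ)
      = ((1 : ℂ) - (Complex.normSq a : ℂ)) * ((1 : ℂ) - (Complex.normSq w : ℂ)) := by
    rw [← Complex.mul_conj, ← Complex.mul_conj, ← Complex.mul_conj, ← Complex.mul_conj]
    simp only [map_sub, map_mul, map_one, Complex.conj_conj]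
    ring
  exact_mod_cast e1

private lemma mobius_lt (a w : ℂ) (ha : ‖a‖ < 1) (hw : ‖w‖ < 1) :
    ‖a - w‖ < ‖1 - (starRingEnd ℂ) a * w‖ := by
  have key := mobius_normsq a w
  have h1 : Complex.normSq a < 1 := by
    rw [← Complex.sq_norm]; nlinarith [norm_nonneg a]
  have h2 : Complex.normSq w < 1 := by
    rw [← Complex.sq_norm]; nlinarith [norm_nonneg w]
  have h3 : Complex.normSq (a - w) < Complex.normSq (1 - (starRingEnd ℂ) a * w) := by nlinarith
  have h4 := Real.sqrt_lt_sqrt (Complex.normSq_nonneg _) h3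
  rwa [← Complex.norm_def, ← Complex.norm_def] at h4

private lemma mobius_denom_ne (a w : ℂ) (ha : ‖a‖ < 1) (hw : ‖w‖ < 1) :
    (1 : ℂ) - (starRingEnd ℂ) a * w ≠ 0 := by
  intro hc
  have hlt := mobius_lt a w ha hw
  rw [hc, norm_zero] at hlt
  exact absurd hlt (norm_nonneg _).not_gt

set_option maxHeartbeats 800000 in
lemma schwarz_pick_lower (ω : ℂ → ℂ) (α : ℝ) (hα0 : 0 ≤ α) (hα1 : α < 1)
    (hdiff : DifferentiableOn ℂ ω (Metric.ball (0:ℂ) 1))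
    (hmaps : Set.MapsTo ω (Metric.ball (0:ℂ) 1) (Metric.ball (0:ℂ) 1))
    (hab : ‖ω 0‖ = α) :
    ∀ z ∈ Metric.ball (0:ℂ) 1,
      α - ‖z‖ ≤ ‖ω z‖ * (1 - α * ‖z‖) := by
  intro z hz
  set a := ω 0 with ha_def
  have haball : ‖a‖ < 1 := by rw [hab]; exact hα1
  set φ : ℂ → ℂ := fun ζ => (a - ω ζ) / (1 - (starRingEnd ℂ) a * ω ζ) with hφ
  have hωζ : ∀ ζ ∈ Metric.ball (0:ℂ) 1, ‖ω ζ‖ < 1 := fun ζ hζ =>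
    mem_ball_zero_iff.1 (hmaps hζ)
  have hφdiff : DifferentiableOn ℂ φ (Metric.ball (0:ℂ) 1) := by
    apply DifferentiableOn.div
    · exact (differentiableOn_const a).sub hdiff
    · exact (differentiableOn_const 1).sub ((differentiableOn_const _).mul hdiff)
    · intro ζ hζ
      exact mobius_denom_ne a (ω ζ) haball (hωζ ζ hζ)
  have hφmaps : Set.MapsTo φ (Metric.ball (0:ℂ) 1) (Metric.ball (0:ℂ) 1) := by
    intro ζ hζ
    rw [mem_ball_zero_iff]
    have hlt := mobius_lt a (ω ζ) haball (hωζ ζ hζ)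
    have hd0 : (0:ℝ) < ‖1 - (starRingEnd ℂ) a * ω ζ‖ :=
      norm_pos_iff.2 (mobius_denom_ne a (ω ζ) haball (hωζ ζ hζ))
    show ‖(a - ω ζ) / (1 - (starRingEnd ℂ) a * ω ζ)‖ < 1
    rw [norm_div, div_lt_one hd0]
    exact hlt
  have hφ0 : φ 0 = 0 := by simp [hφ, ← ha_def]
  have hz1 : ‖z‖ < 1 := mem_ball_zero_iff.1 hz
  have hschwarz : ‖φ z‖ ≤ ‖z‖ :=
    Complex.norm_le_norm_of_mapsTo_ball hφdiff (hφmaps.mono_right ball_subset_closedBall) hφ0 hz1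
  have hd0 : (0:ℝ) < ‖1 - (starRingEnd ℂ) a * ω z‖ :=
    norm_pos_iff.2 (mobius_denom_ne a (ω z) haball (hωζ z hz))
  set m := ‖ω z‖ with hm
  set r := ‖z‖ with hr
  set A := ‖a - ω z‖ with hA
  set B := ‖1 - (starRingEnd ℂ) a * ω z‖ with hB
  have hkey : A ≤ r * B := by
    have h := hschwarz
    rw [hφ] at h
    simp only [norm_div] at h
    rw [div_le_iff₀ hd0] at h
    exact h
  have hm1 : m < 1 := hωζ z hz
  have hm0 : 0 ≤ m := norm_nonneg _
  have hr0 : 0 ≤ r := norm_nonneg _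
  by_cases hcase : α ≤ m
  · nlinarith [mul_nonneg hr0 (by nlinarith : (0:ℝ) ≤ 1 - m * α)]
  push_neg at hcase
  have hXA : α - m ≤ A := by
    have hh : ‖a‖ - ‖ω z‖ ≤ ‖a - ω z‖ := norm_sub_norm_le a (ω z)
    rw [hab] at hh
    exact hh
  have hABsq : B ^ 2 - A ^ 2 = (1 - α ^ 2) * (1 - m ^ 2) := by
    have hmm := mobius_normsq a (ω z)
    rw [← Complex.sq_norm, ← Complex.sq_norm, ← Complex.sq_norm, ← Complex.sq_norm] at hmm
    rw [hab] at hmm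
    rw [hA, hB, hm]
    linarith
  have hA0 : 0 ≤ A := norm_nonneg _
  have hX0 : 0 < α - m := by linarith
  have hY0 : 0 < 1 - α * m := by nlinarith
  have hXY : α - m ≤ 1 - α * m := by nlinarith
  have hXsqA : (α - m)^2 ≤ A^2 := pow_le_pow_left₀ hX0.le hXA 2
  have hXsqY : (α - m)^2 ≤ (1 - α*m)^2 := pow_le_pow_left₀ hX0.le hXY 2
  have hB2 : B^2 = A^2 + ((1 - α*m)^2 - (α - m)^2) := by linear_combination hABsq
  have hsq : ((α - m) * B)^2 ≤ (A * (1 - α * m))^2 := by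
    have hprod : 0 ≤ (A^2 - (α - m)^2) * ((1 - α*m)^2 - (α - m)^2) :=
      mul_nonneg (sub_nonneg.2 hXsqA) (sub_nonneg.2 hXsqY)
    nlinarith [hprod, hB2]
  have hkey2 : (α - m) * B ≤ A * (1 - α * m) := by
    have h1 : 0 ≤ (α - m) * B := by positivity
    have h2 : 0 ≤ A * (1 - α * m) := by positivity
    nlinarith [hsq]
  have h5 : α - m ≤ r * (1 - α * m) := by
    have h6 : (α - m) * B ≤ (r * (1 - α * m)) * B := by nlinarith [hkey2, mul_le_mul_of_nonneg_right hkey (le_of_lt hY0)]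
    exact le_of_mul_le_mul_right h6 hd0
  nlinarith [h5]



-- strict derivative from DifferentiableOn on open set
lemma strictDeriv_of_diffOn {f : ℂ → ℂ} {s : Set ℂ} (hs : IsOpen s)
    (hd : DifferentiableOn ℂ f s) {x : ℂ} (hx : x ∈ s) :
    HasStrictDerivAt f (deriv f x) x := by
  obtain ⟨p, hp⟩ := hd.analyticAt (hs.mem_nhds hx)
  have h1 := hp.hasStrictDerivAt
  have h2 : deriv f x = p 1 fun _ => 1 := hp.deriv
  rwa [h2]

lemma starlike_contraction (h : ℂ → ℂ)
    (hd : DifferentiableOn ℂ h (Metric.ball (0:ℂ) 1))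
    (h0 : h 0 = 0)
    (hne : ∀ z ∈ Metric.ball (0:ℂ) 1, deriv h z ≠ 0)
    (hinj : Set.InjOn h (Metric.ball (0:ℂ) 1))
    (hstar : ∀ w ∈ h '' (Metric.ball (0:ℂ) 1), segment ℝ 0 w ⊆ h '' (Metric.ball (0:ℂ) 1))
    (t : ℝ) (ht : t ∈ Set.Ioo (0:ℝ) 1) :
    ∀ z ∈ Metric.ball (0:ℂ) 1, ∀ w ∈ Metric.ball (0:ℂ) 1,
      h w = (t : ℂ) * h z → ‖w‖ ≤ ‖z‖ := by
  have hex : ∀ ζ ∈ Metric.ball (0:ℂ) 1, ∃ w, w ∈ Metric.ball (0:ℂ) 1 ∧ h w = (t:ℂ) * h ζ := by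
    intro ζ hζ
    have hseg : (t:ℂ) * h ζ ∈ segment ℝ 0 (h ζ) := by
      refine ⟨1 - t, t, by linarith [ht.2], le_of_lt ht.1, by ring, ?_⟩
      simp [Complex.real_smul]
    obtain ⟨w, hw, hweq⟩ := hstar (h ζ) (mem_image_of_mem h hζ) hseg
    exact ⟨w, hw, hweq⟩
  choose φ hφb hφeq using hex
  -- φ is defined only on the ball (dependent choice); make a total function
  -- use Classical choice into a plain function
  classical
  set Φ : ℂ → ℂ := fun ζ => if hζ : ζ ∈ Metric.ball (0:ℂ) 1 then φ ζ hζ else 0 with hΦ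
  have hΦb : ∀ ζ (hζ : ζ ∈ Metric.ball (0:ℂ) 1), Φ ζ ∈ Metric.ball (0:ℂ) 1 := by
    intro ζ hζ; simp only [hΦ, dif_pos hζ]; exact hφb ζ hζ
  have hΦeq : ∀ ζ (hζ : ζ ∈ Metric.ball (0:ℂ) 1), h (Φ ζ) = (t:ℂ) * h ζ := by
    intro ζ hζ; simp only [hΦ, dif_pos hζ]; exact hφeq ζ hζ
  have hΦdiff : ∀ ζ₀ ∈ Metric.ball (0:ℂ) 1, DifferentiableAt ℂ Φ ζ₀ := by
    intro ζ₀ hζ₀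
    have hw₀b := hΦb ζ₀ hζ₀
    have hw₀ := hΦeq ζ₀ hζ₀
    have hs := strictDeriv_of_diffOn isOpen_ball hd hw₀b
    have hne0 := hne _ hw₀b
    set E := hs.hasStrictFDerivAt_equiv hne0 with hE
    set L : ℂ → ℂ := E.localInverse h _ (Φ ζ₀) with hL
    have hconth : ContinuousAt h ζ₀ := hd.continuousOn.continuousAt (isOpen_ball.mem_nhds hζ₀)
    have htend : Tendsto (fun ζ => (t:ℂ) * h ζ) (𝓝 ζ₀) (𝓝 (h (Φ ζ₀))) := by
      rw [hw₀]
      exact (continuousAt_const.mul hconth).tendsto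
    have hLcont : Tendsto (fun ζ => L ((t:ℂ) * h ζ)) (𝓝 ζ₀) (𝓝 (Φ ζ₀)) := by
      have h1 : Tendsto L (𝓝 (h (Φ ζ₀))) (𝓝 (Φ ζ₀)) := by
        have := E.localInverse_continuousAt
        rw [ContinuousAt, E.localInverse_apply_image] at this
        exact this
      exact h1.comp htend
    have hev1 : ∀ᶠ ζ in 𝓝 ζ₀, h (L ((t:ℂ) * h ζ)) = (t:ℂ) * h ζ :=
      htend.eventually E.eventually_right_inverse
    have hev2 : ∀ᶠ ζ in 𝓝 ζ₀, L ((t:ℂ) * h ζ) ∈ Metric.ball (0:ℂ) 1 :=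
      hLcont.eventually (isOpen_ball.eventually_mem hw₀b)
    have hev3 : ∀ᶠ ζ in 𝓝 ζ₀, ζ ∈ Metric.ball (0:ℂ) 1 :=
      isOpen_ball.eventually_mem hζ₀
    have hevEq : Φ =ᶠ[𝓝 ζ₀] fun ζ => L ((t:ℂ) * h ζ) := by
      filter_upwards [hev1, hev2, hev3] with ζ h1 h2 h3
      exact hinj (hΦb ζ h3) h2 (by rw [hΦeq ζ h3, h1])
    have hFdiff : DifferentiableAt ℂ (fun ζ => L ((t:ℂ) * h ζ)) ζ₀ := by
      have hLd : DifferentiableAt ℂ L (h (Φ ζ₀)) := E.to_localInverse.differentiableAt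
      have hinner : DifferentiableAt ℂ (fun ζ => (t:ℂ) * h ζ) ζ₀ :=
        (differentiableAt_const _).mul (hd.differentiableAt (isOpen_ball.mem_nhds hζ₀))
      rw [hw₀] at hLd
      exact hLd.comp ζ₀ hinner
    exact hevEq.differentiableAt_iff.2 hFdiff
  have hΦ0 : Φ 0 = 0 := by
    have h01 : (0:ℂ) ∈ Metric.ball (0:ℂ) 1 := by simp
    refine hinj (hΦb 0 h01) h01 ?_
    rw [hΦeq 0 h01, h0]
    exact mul_zero _
  have hschwarz : ∀ z ∈ Metric.ball (0:ℂ) 1, ‖Φ z‖ ≤ ‖z‖ := by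
    intro z hz
    exact Complex.norm_le_norm_of_mapsTo_ball
      (fun ζ hζ => (hΦdiff ζ hζ).differentiableWithinAt)
      (fun ζ hζ => ball_subset_closedBall (hΦb ζ hζ)) hΦ0 (mem_ball_zero_iff.1 hz)
  intro z hz w hw hweq
  have : w = Φ z := hinj hw (hΦb z hz) (by rw [hweq, hΦeq z hz])
  rw [this]
  exact hschwarz z hz

lemma re_condition (h : ℂ → ℂ)
    (hd : DifferentiableOn ℂ h (Metric.ball (0:ℂ) 1))
    (h0 : h 0 = 0)
    (hne : ∀ z ∈ Metric.ball (0:ℂ) 1, deriv h z ≠ 0)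
    (hinj : Set.InjOn h (Metric.ball (0:ℂ) 1))
    (hstar : ∀ w ∈ h '' (Metric.ball (0:ℂ) 1), segment ℝ 0 w ⊆ h '' (Metric.ball (0:ℂ) 1)) :
    ∀ z ∈ Metric.ball (0:ℂ) 1,
      0 ≤ ((starRingEnd ℂ) z * h z * (starRingEnd ℂ) (deriv h z)).re := by
  intro z hz
  have hs := strictDeriv_of_diffOn isOpen_ball hd hz
  have hne0 := hne z hz
  set E := hs.hasStrictFDerivAt_equiv hne0 with hE
  set L : ℂ → ℂ := E.localInverse h _ z with hL
  set W : ℂ → ℂ := fun τ => L (τ * h z) with hW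
  have hW1 : W 1 = z := by
    simp only [hW, one_mul]
    exact E.localInverse_apply_image
  -- strict derivative of W at 1
  have hinner : HasStrictDerivAt (fun τ : ℂ => τ * h z) (1 * h z) 1 :=
    (hasStrictDerivAt_id 1).mul_const (h z)
  have hLd : HasStrictDerivAt L (deriv h z)⁻¹ (h z) := hs.to_localInverse hne0
  have hLd' : HasStrictDerivAt L (deriv h z)⁻¹ ((1:ℂ) * h z) := by rwa [one_mul]
  have hWd : HasStrictDerivAt W ((deriv h z)⁻¹ * (1 * h z)) 1 := hLd'.comp 1 hinner
  set d : ℂ := (deriv h z)⁻¹ * (1 * h z) with hd_def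
  -- real path
  have hWr : HasDerivAt (fun s : ℝ => W (s : ℂ)) d 1 := by
    have := hWd.hasDerivAt
    rw [show (1:ℂ) = ((1:ℝ):ℂ) by norm_num] at this
    exact this.comp_ofReal
  have hre : HasDerivAt (fun s : ℝ => (W (s:ℂ)).re) d.re 1 :=
    Complex.reCLM.hasFDerivAt.comp_hasDerivAt 1 hWr
  have him : HasDerivAt (fun s : ℝ => (W (s:ℂ)).im) d.im 1 :=
    Complex.imCLM.hasFDerivAt.comp_hasDerivAt 1 hWr
  set ψ : ℝ → ℝ := fun s => Complex.normSq (W (s:ℂ)) with hψ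
  set D : ℝ := d.re * (W 1).re + (W 1).re * d.re + (d.im * (W 1).im + (W 1).im * d.im) with hD
  have hψd : HasDerivAt ψ D 1 := by
    have heq : ψ = fun s : ℝ => (W (s:ℂ)).re * (W (s:ℂ)).re + (W (s:ℂ)).im * (W (s:ℂ)).im := by
      funext s; simp [hψ, Complex.normSq_apply]
    rw [heq]
    have := ((hre.mul hre).add (him.mul him))
    exact this
  -- eventually ψ s ≤ ψ 1 for s < 1
  have hcontL : Tendsto (fun s : ℝ => W (s:ℂ)) (𝓝 1) (𝓝 z) := by
    have h1 : Tendsto L (𝓝 (h z)) (𝓝 z) := by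
      have := E.localInverse_continuousAt
      rw [ContinuousAt, E.localInverse_apply_image] at this
      exact this
    have h2 : Tendsto (fun s : ℝ => ((s:ℂ) * h z)) (𝓝 1) (𝓝 (h z)) := by
      have : ContinuousAt (fun s : ℝ => ((s:ℂ) * h z)) 1 :=
        (Complex.continuous_ofReal.continuousAt).mul continuousAt_const
      simpa using this.tendsto
    exact h1.comp h2
  have htendC : Tendsto (fun s : ℝ => ((s:ℂ) * h z)) (𝓝 1) (𝓝 (h z)) := by
    have : ContinuousAt (fun s : ℝ => ((s:ℂ) * h z)) 1 :=
      (Complex.continuous_ofReal.continuousAt).mul continuousAt_const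
    simpa using this.tendsto
  have hev1 : ∀ᶠ s : ℝ in 𝓝 1, h (W (s:ℂ)) = (s:ℂ) * h z :=
    htendC.eventually E.eventually_right_inverse
  have hev2 : ∀ᶠ s : ℝ in 𝓝 1, W (s:ℂ) ∈ Metric.ball (0:ℂ) 1 :=
    hcontL.eventually (isOpen_ball.eventually_mem hz)
  have hmax : ∀ᶠ s : ℝ in 𝓝[<] (1:ℝ), ψ s ≤ ψ 1 := by
    have hev0 : ∀ᶠ s : ℝ in 𝓝[<] (1:ℝ), s ∈ Set.Ioo (0:ℝ) 1 :=
      Ioo_mem_nhdsLT_of_mem (by norm_num : (1:ℝ) ∈ Set.Ioc (0:ℝ) 1)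
    filter_upwards [hev0, (hev1.filter_mono nhdsWithin_le_nhds),
      (hev2.filter_mono nhdsWithin_le_nhds)] with s hs01 hseq hsball
    have habs : ‖W (s:ℂ)‖ ≤ ‖z‖ :=
      starlike_contraction h hd h0 hne hinj hstar s hs01 z hz (W (s:ℂ)) hsball hseq
    have : Complex.normSq (W (s:ℂ)) ≤ Complex.normSq z := by
      rw [Complex.normSq_eq_norm_sq, Complex.normSq_eq_norm_sq]
      exact pow_le_pow_left₀ (norm_nonneg _) habs 2
    simpa [hψ, hW1] using this
  -- one-sided derivative sign
  have hslope : Tendsto (slope ψ 1) (𝓝[≠] (1:ℝ)) (𝓝 D) :=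
    hasDerivAt_iff_tendsto_slope.1 hψd
  have hslope' : Tendsto (slope ψ 1) (𝓝[<] (1:ℝ)) (𝓝 D) :=
    hslope.mono_left (nhdsWithin_mono 1 (fun x hx => ne_of_lt hx))
  have hDnn : 0 ≤ D := by
    refine ge_of_tendsto hslope' ?_
    filter_upwards [hmax, self_mem_nhdsWithin] with s hsle hslt
    rw [slope_def_field]
    have h1 : ψ s - ψ 1 ≤ 0 := by linarith
    have hs1 : s < 1 := hslt
    have h2 : s - 1 ≤ 0 := by linarith
    exact div_nonneg_iff.2 (Or.inr ⟨h1, h2⟩)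
  -- interpret D
  have hcd : ((starRingEnd ℂ) z * d).re = z.re * d.re + z.im * d.im := by
    rw [Complex.mul_re, Complex.conj_re, Complex.conj_im]; ring
  have hDre : D = 2 * ((starRingEnd ℂ) z * d).re := by
    rw [hD, hW1, hcd]; ring
  have hre_d : 0 ≤ ((starRingEnd ℂ) z * d).re := by linarith [hDnn, hDre.symm.le]
  -- now convert to the conj (deriv h z) form
  have hconv : (starRingEnd ℂ) z * d
      = (((Complex.normSq (deriv h z))⁻¹ : ℝ) : ℂ) * ((starRingEnd ℂ) z * h z * (starRingEnd ℂ) (deriv h z)) := by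
    rw [hd_def, one_mul, Complex.inv_def]
    push_cast
    ring
  have hnsq : (0:ℝ) < Complex.normSq (deriv h z) := Complex.normSq_pos.2 hne0
  have hthis : ((starRingEnd ℂ) z * d).re
      = (Complex.normSq (deriv h z))⁻¹ * ((starRingEnd ℂ) z * h z * (starRingEnd ℂ) (deriv h z)).re := by
    rw [hconv, Complex.re_ofReal_mul]
  rw [hthis] at hre_d
  have hinv : (0:ℝ) < (Complex.normSq (deriv h z))⁻¹ := by positivity
  nlinarith [hre_d, hinv]

set_option maxHeartbeats 1000000 in
lemma herglotz_bound (h : ℂ → ℂ)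
    (hd : DifferentiableOn ℂ h (Metric.ball (0:ℂ) 1))
    (h0 : h 0 = 0) (h1 : deriv h 0 = 1)
    (hzne : ∀ z ∈ Metric.ball (0:ℂ) 1, z ≠ 0 → h z ≠ 0)
    (hRe : ∀ z ∈ Metric.ball (0:ℂ) 1,
      0 ≤ ((starRingEnd ℂ) z * h z * (starRingEnd ℂ) (deriv h z)).re) :
    ∀ z ∈ Metric.ball (0:ℂ) 1,
      (h z * (deriv h z / dslope h 0 z) = z * deriv h z) ∧
      (1 - ‖z‖) ≤ (1 + ‖z‖) * (deriv h z / dslope h 0 z).re := by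
  have h01 : (0:ℂ) ∈ Metric.ball (0:ℂ) 1 := by simp
  set k : ℂ → ℂ := dslope h 0 with hk
  have hk0 : k 0 = 1 := by rw [hk, dslope_same, h1]
  have hkz : ∀ z : ℂ, z ≠ 0 → k z = z⁻¹ * h z := by
    intro z hzne0
    rw [hk, dslope_of_ne h hzne0, slope_def_module]
    simp [h0, smul_eq_mul]
  have hkne : ∀ z ∈ Metric.ball (0:ℂ) 1, k z ≠ 0 := by
    intro z hz
    rcases eq_or_ne z 0 with rfl | hz0
    · rw [hk0]; exact one_ne_zero
    · rw [hkz z hz0]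
      exact mul_ne_zero (inv_ne_zero hz0) (hzne z hz hz0)
  have hkd : DifferentiableOn ℂ k (Metric.ball (0:ℂ) 1) :=
    (differentiableOn_dslope (isOpen_ball.mem_nhds h01)).2 hd
  have hderivd : DifferentiableOn ℂ (deriv h) (Metric.ball (0:ℂ) 1) :=
    ((hd.analyticOnNhd isOpen_ball).deriv).differentiableOn
  set p : ℂ → ℂ := fun z => deriv h z / k z with hp
  have hpd : DifferentiableOn ℂ p (Metric.ball (0:ℂ) 1) :=
    hderivd.div hkd hkne
  have hp0 : p 0 = 1 := by rw [hp]; simp [hk0, h1]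
  have hpeq : ∀ z ∈ Metric.ball (0:ℂ) 1, h z * p z = z * deriv h z := by
    intro z hz
    rcases eq_or_ne z 0 with rfl | hz0
    · simp [h0]
    · rw [hp]
      simp only
      rw [hkz z hz0]
      field_simp [hzne z hz hz0]
  have hpre : ∀ z ∈ Metric.ball (0:ℂ) 1, 0 ≤ (p z).re := by
    intro z hz
    rcases eq_or_ne z 0 with rfl | hz0
    · rw [hp0]; norm_num
    · have hRe' := hRe z hz
      -- 0 ≤ (z * deriv h z * conj (h z)).re
      have hconj : (starRingEnd ℂ) (z * deriv h z * (starRingEnd ℂ) (h z))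
          = (starRingEnd ℂ) z * h z * (starRingEnd ℂ) (deriv h z) := by
        simp only [map_mul, Complex.conj_conj]
        ring
      have hRe2 : 0 ≤ (z * deriv h z * (starRingEnd ℂ) (h z)).re := by
        rw [← Complex.conj_re (z * deriv h z * (starRingEnd ℂ) (h z)), hconj]
        exact hRe'
      -- p z = (normSq (h z))⁻¹ • (z * deriv h z * conj (h z))
      have hhz := hzne z hz hz0
      have hNpos : (0:ℝ) < Complex.normSq (h z) := Complex.normSq_pos.2 hhz
      have hpz : p z = (((Complex.normSq (h z))⁻¹ : ℝ) : ℂ) * (z * deriv h z * (starRingEnd ℂ) (h z)) := by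
        rw [hp]
        simp only
        rw [hkz z hz0]
        rw [div_eq_mul_inv, mul_inv, inv_inv, Complex.inv_def]
        push_cast
        ring
      rw [hpz, Complex.re_ofReal_mul]
      positivity
  -- the Schwarz function q
  have hp1ne : ∀ z ∈ Metric.ball (0:ℂ) 1, p z + 1 ≠ 0 := by
    intro z hz hc
    have : (p z + 1).re = 0 := by rw [hc]; simp
    rw [Complex.add_re, Complex.one_re] at this
    linarith [hpre z hz]
  set q : ℂ → ℂ := fun z => (p z - 1) / (p z + 1) with hq
  have hqd : DifferentiableOn ℂ q (Metric.ball (0:ℂ) 1) :=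
    (hpd.sub (differentiableOn_const 1)).div (hpd.add (differentiableOn_const 1)) hp1ne
  have hq0 : q 0 = 0 := by rw [hq]; simp [hp0]
  have hqle : ∀ z ∈ Metric.ball (0:ℂ) 1, ‖q z‖ ≤ 1 := by
    intro z hz
    have hle : Complex.normSq (p z - 1) ≤ Complex.normSq (p z + 1) := by
      simp only [Complex.normSq_apply, Complex.sub_re, Complex.sub_im, Complex.add_re,
        Complex.add_im, Complex.one_re, Complex.one_im]
      nlinarith [hpre z hz]
    have habs : ‖p z - 1‖ ≤ ‖p z + 1‖ := by
      rw [← Real.sqrt_sq (norm_nonneg (p z - 1)), ← Real.sqrt_sq (norm_nonneg (p z + 1))]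
      rw [Complex.sq_norm, Complex.sq_norm]
      exact Real.sqrt_le_sqrt hle
    rw [hq]
    simp only [norm_div]
    have hpos : 0 < ‖p z + 1‖ := norm_pos_iff.2 (hp1ne z hz)
    rw [div_le_one hpos]
    exact habs
  -- Schwarz inequality |q z| ≤ |z| via radius 1+ε
  have hqschwarz : ∀ z ∈ Metric.ball (0:ℂ) 1, ‖q z‖ ≤ ‖z‖ := by
    intro z hz
    have hεbound : ∀ ε : ℝ, 0 < ε → ‖q z‖ ≤ (1 + ε) * ‖z‖ := by
      intro ε hε
      have hmaps : Set.MapsTo q (Metric.ball (0:ℂ) 1) (Metric.ball (q 0) (1 + ε)) := by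
        intro ζ hζ
        rw [mem_ball, hq0, dist_zero_right]
        calc ‖q ζ‖ ≤ 1 := hqle ζ hζ
        _ < 1 + ε := by linarith
      have := Complex.dist_le_div_mul_dist_of_mapsTo_ball hqd (hmaps.mono_right ball_subset_closedBall) (mem_ball_zero_iff.2 (mem_ball_zero_iff.1 hz))
      rw [hq0, dist_zero_right, dist_zero_right, div_one] at this
      exact this
    have htend : Filter.Tendsto (fun ε : ℝ => (1 + ε) * ‖z‖) (nhdsWithin 0 (Set.Ioi 0))
        (nhds ((1 + 0) * ‖z‖)) := by
      apply Filter.Tendsto.mono_left _ nhdsWithin_le_nhds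
      exact ((continuous_const.add continuous_id).mul continuous_const).tendsto 0
    have := ge_of_tendsto htend (by
      filter_upwards [self_mem_nhdsWithin] with ε hε
      exact hεbound ε hε)
    simpa using this
  -- conclude
  intro z hz
  refine ⟨hpeq z hz, ?_⟩
  set r := ‖z‖ with hr
  have hr0 : 0 ≤ r := norm_nonneg z
  have hr1 : r < 1 := mem_ball_zero_iff.1 hz
  have hqz := hqschwarz z hz
  -- |p - 1| ≤ r |p + 1|
  have habs : ‖p z - 1‖ ≤ r * ‖p z + 1‖ := by
    have hpos : 0 < ‖p z + 1‖ := norm_pos_iff.2 (hp1ne z hz)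
    have := hqz
    rw [hq] at this
    simp only [norm_div] at this
    rw [div_le_iff₀ hpos] at this
    linarith
  -- squares
  have hsq : Complex.normSq (p z - 1) ≤ r^2 * Complex.normSq (p z + 1) := by
    have h1' := mul_le_mul habs habs (norm_nonneg _) (by positivity)
    rw [← Complex.sq_norm, ← Complex.sq_norm]
    nlinarith [h1']
  set x := (p z).re with hx
  set y := (p z).im with hy
  have hx0 : 0 ≤ x := hpre z hz
  have hexp : (x-1)^2 + y^2 ≤ r^2 * ((x+1)^2 + y^2) := by
    have := hsq
    simp only [Complex.normSq_apply, Complex.sub_re, Complex.sub_im, Complex.add_re,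
      Complex.add_im, Complex.one_re, Complex.one_im] at this
    nlinarith [this]
  -- conclude (1 - r) ≤ (1+r) x
  have hP : ((1-r)*x - (1+r)) * ((1+r)*x - (1-r)) ≤ 0 := by
    nlinarith [hexp, mul_nonneg (sq_nonneg y) (by nlinarith : (0:ℝ) ≤ 1 - r^2)]
  by_contra hcon
  push_neg at hcon
  have hrx : 0 ≤ r * x := mul_nonneg hr0 hx0
  have hB : (1+r)*x - (1-r) < 0 := by linarith
  have hxlt : x < 1 := by nlinarith
  have hA : (1-r)*x - (1+r) < 0 := by nlinarith
  have hpos : 0 < ((1-r)*x - (1+r)) * ((1+r)*x - (1-r)) := mul_pos_of_neg_of_neg hA hB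
  linarith [hP]

set_option maxHeartbeats 1600000 in
lemma growth_bound (h : ℂ → ℂ)
    (hd : DifferentiableOn ℂ h (Metric.ball (0:ℂ) 1))
    (h0 : h 0 = 0) (h1 : deriv h 0 = 1)
    (hzne : ∀ z ∈ Metric.ball (0:ℂ) 1, z ≠ 0 → h z ≠ 0)
    (hRe : ∀ z ∈ Metric.ball (0:ℂ) 1,
      0 ≤ ((starRingEnd ℂ) z * h z * (starRingEnd ℂ) (deriv h z)).re) :
    ∀ z ∈ Metric.ball (0:ℂ) 1,
      ‖z‖ ≤ (1 + ‖z‖)^2 * ‖h z‖ := by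
  have hH := herglotz_bound h hd h0 h1 hzne hRe
  intro z hz
  rcases eq_or_ne z 0 with rfl | hz0
  · simp
  set r := ‖z‖ with hr
  have hr0 : 0 < r := norm_pos_iff.2 hz0
  have hr1 : r < 1 := mem_ball_zero_iff.1 hz
  set c : ℝ → ℂ := fun t => h ((t:ℂ)*z) with hc
  set v : ℝ → ℝ := fun t => Complex.normSq (c t) with hv
  set u : ℝ → ℝ := fun t => Real.log (v t) / 2 - Real.log t + 2 * Real.log (1 + t*r) with hu
  have hwball : ∀ t ∈ Set.Ioc (0:ℝ) 1, ((t:ℂ)*z) ∈ Metric.ball (0:ℂ) 1 := by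
    intro t ht
    rw [mem_ball_zero_iff]
    rw [norm_mul, Complex.norm_real, Real.norm_eq_abs, abs_of_pos ht.1]
    calc t * r ≤ 1 * r := by nlinarith [ht.2, hr0]
    _ < 1 := by rw [one_mul]; exact hr1
  have hwne : ∀ t ∈ Set.Ioc (0:ℝ) 1, ((t:ℂ)*z) ≠ 0 := by
    intro t ht
    exact mul_ne_zero (by exact_mod_cast ht.1.ne') hz0
  have habsw : ∀ t ∈ Set.Ioc (0:ℝ) 1, ‖(t:ℂ)*z‖ = t * r := by
    intro t ht
    rw [norm_mul, Complex.norm_real, Real.norm_eq_abs, abs_of_pos ht.1]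
  have hvpos : ∀ t ∈ Set.Ioc (0:ℝ) 1, 0 < v t := by
    intro t ht
    exact Complex.normSq_pos.2 (hzne _ (hwball t ht) (hwne t ht))
  -- derivative of u on Ioc
  have hUderiv : ∀ t ∈ Set.Ioc (0:ℝ) 1, HasDerivAt u
      ((deriv h ((t:ℂ)*z) / dslope h 0 ((t:ℂ)*z)).re / t - 1/t + 2 * (r / (1 + t*r))) t := by
    intro t ht
    set w : ℂ := (t:ℂ)*z with hw
    have hwb := hwball t ht
    have hinner : HasDerivAt (fun τ : ℂ => τ * z) z (t:ℂ) := by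
      simpa using (hasDerivAt_id (t:ℂ)).mul_const z
    have houter : HasDerivAt h (deriv h w) w :=
      (hd.differentiableAt (isOpen_ball.mem_nhds hwb)).hasDerivAt
    have hcomp : HasDerivAt (fun τ : ℂ => h (τ * z)) (deriv h w * z) (t:ℂ) :=
      HasDerivAt.comp (t:ℂ) houter hinner
    have hcd : HasDerivAt c (deriv h w * z) t := hcomp.comp_ofReal
    set d : ℂ := deriv h w * z with hdd
    have hre : HasDerivAt (fun s : ℝ => (c s).re) d.re t :=
      Complex.reCLM.hasFDerivAt.comp_hasDerivAt t hcd
    have him : HasDerivAt (fun s : ℝ => (c s).im) d.im t :=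
      Complex.imCLM.hasFDerivAt.comp_hasDerivAt t hcd
    set E : ℝ := ((starRingEnd ℂ) (c t) * d).re with hE
    have hvd : HasDerivAt v (2 * E) t := by
      have heq : v = fun s : ℝ => (c s).re * (c s).re + (c s).im * (c s).im := by
        funext s; simp [hv, Complex.normSq_apply]
      rw [heq]
      have hcalc := (hre.mul hre).add (him.mul him)
      have hEeq : E = (c t).re * d.re + (c t).im * d.im := by
        rw [hE, Complex.mul_re, Complex.conj_re, Complex.conj_im]; ring
      have : d.re * (c t).re + (c t).re * d.re + (d.im * (c t).im + (c t).im * d.im) = 2 * E := by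
        rw [hEeq]; ring
      rwa [this] at hcalc
    have hvpos' := hvpos t ht
    have hlogv : HasDerivAt (fun s : ℝ => Real.log (v s)) (2 * E / v t) t :=
      hvd.log hvpos'.ne'
    have hlogt : HasDerivAt Real.log t⁻¹ t := Real.hasDerivAt_log ht.1.ne'
    have h1tr : 0 < 1 + t * r := by nlinarith [ht.1, hr0]
    have hlin : HasDerivAt (fun s : ℝ => 1 + s * r) r t := by
      simpa using ((hasDerivAt_id t).mul_const r).const_add 1
    have hlog1 : HasDerivAt (fun s : ℝ => Real.log (1 + s * r)) (r / (1 + t*r)) t := by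
      have := hlin.log h1tr.ne'
      simpa using this
    have hud : HasDerivAt u (2 * E / v t / 2 - t⁻¹ + 2 * (r / (1 + t*r))) t :=
      (((hlogv.div_const 2).sub hlogt).add (hlog1.const_mul 2))
    -- identify the derivative value
    have hpe := (hH w hwb).1
    set P : ℂ := deriv h w / dslope h 0 w with hP
    have hT : ((t:ℝ):ℂ) * ((starRingEnd ℂ) (c t) * d) = ((v t : ℝ):ℂ) * P := by
      have hct : c t = h w := rfl
      have step1 : ((t:ℝ):ℂ) * ((starRingEnd ℂ) (c t) * d) = (starRingEnd ℂ) (h w) * (w * deriv h w) := by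
        rw [hct, hdd, hw]; ring
      rw [step1, ← hpe]
      calc (starRingEnd ℂ) (h w) * (h w * P) = (h w * (starRingEnd ℂ) (h w)) * P := by ring
        _ = ((Complex.normSq (h w) : ℝ):ℂ) * P := by rw [Complex.mul_conj]
        _ = ((v t : ℝ):ℂ) * P := rfl
    have hTre : t * E = v t * P.re := by
      have := congrArg Complex.re hT
      rwa [Complex.re_ofReal_mul, Complex.re_ofReal_mul] at this
    have hval : 2 * E / v t / 2 - t⁻¹ + 2 * (r / (1 + t*r))
        = P.re / t - 1/t + 2 * (r / (1 + t*r)) := by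
      have h2 : 2 * E / v t / 2 = E / v t := by ring
      have h3 : E / v t = P.re / t := by
        rw [div_eq_div_iff hvpos'.ne' ht.1.ne']
        linarith [hTre]
      rw [h2, h3]
      try rw [one_div]
      try rfl
    rw [hval] at hud
    exact hud
  -- derivative is nonnegative on Ioo
  have hUnonneg : ∀ t ∈ Set.Ioo (0:ℝ) 1,
      0 ≤ (deriv h ((t:ℂ)*z) / dslope h 0 ((t:ℂ)*z)).re / t - 1/t + 2 * (r / (1 + t*r)) := by
    intro t ht
    have htIoc : t ∈ Set.Ioc (0:ℝ) 1 := ⟨ht.1, ht.2.le⟩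
    set w : ℂ := (t:ℂ)*z with hw
    have hwb := hwball t htIoc
    have hher := (hH w hwb).2
    rw [habsw t htIoc] at hher
    set X : ℝ := (deriv h w / dslope h 0 w).re with hX
    have h1tr : 0 < 1 + t * r := by nlinarith [ht.1, hr0]
    have hkey : 0 ≤ X * (1 + t*r) - (1 - t*r) := by linarith [hher]
    have h4 : 0 ≤ ((X - 1) * (1 + t*r) + 2*r*t) := by nlinarith [hkey]
    have h5 : 0 ≤ ((X - 1) * (1 + t*r) + 2*r*t) / (t * (1+t*r)) :=
      div_nonneg h4 (mul_pos ht.1 h1tr).le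
    have h6 : ((X - 1) * (1 + t*r) + 2*r*t) / (t * (1+t*r)) = (X-1)/t + 2*(r/(1+t*r)) := by
      field_simp [ht.1.ne', h1tr.ne']
      try ring
    have h7 : (X - 1)/t = X/t - 1/t := sub_div X 1 t
    linarith [h5, h6, h7]
  -- monotone on Ioc 0 1
  have humono : MonotoneOn u (Set.Ioc (0:ℝ) 1) := by
    apply monotoneOn_of_deriv_nonneg (convex_Ioc 0 1)
    · intro t ht
      exact (hUderiv t ht).continuousAt.continuousWithinAt
    · rw [interior_Ioc]
      intro t ht
      exact ((hUderiv t ⟨ht.1, ht.2.le⟩).differentiableAt).differentiableWithinAt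
    · rw [interior_Ioc]
      intro t ht
      rw [(hUderiv t ⟨ht.1, ht.2.le⟩).deriv]
      exact hUnonneg t ht
  -- limit of u at 0+
  set k : ℂ → ℂ := dslope h 0 with hk
  have hkd : DifferentiableOn ℂ k (Metric.ball (0:ℂ) 1) :=
    (differentiableOn_dslope (isOpen_ball.mem_nhds (by simp))).2 hd
  have hk0 : k 0 = 1 := by rw [hk, dslope_same, h1]
  have hkmul : ∀ w : ℂ, w * k w = h w := by
    intro w
    have := sub_smul_dslope h 0 w
    rw [sub_zero, h0, sub_zero, smul_eq_mul] at this
    exact this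
  set G : ℝ → ℝ := fun t => Real.log (r * ‖k ((t:ℂ)*z)‖) + 2 * Real.log (1 + t*r) with hG
  have hueqG : ∀ t ∈ Set.Ioo (0:ℝ) 1, u t = G t := by
    intro t ht
    have htIoc : t ∈ Set.Ioc (0:ℝ) 1 := ⟨ht.1, ht.2.le⟩
    set w : ℂ := (t:ℂ)*z with hw
    have hwb := hwball t htIoc
    have hwn := hwne t htIoc
    have hhw : h w ≠ 0 := hzne w hwb hwn
    have hkw : k w ≠ 0 := by
      intro hc
      apply hhw
      rw [← hkmul w, hc, mul_zero]
    have habsh : ‖h w‖ = (t * r) * ‖k w‖ := by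
      rw [← hkmul w, norm_mul, habsw t htIoc]
    have hlogv2 : Real.log (v t) / 2 = Real.log (‖h w‖) := by
      have : v t = ‖h w‖ ^ 2 := by
        rw [hv]; exact Complex.normSq_eq_norm_sq _
      rw [this, Real.log_pow]
      push_cast
      ring
    have hkpos : 0 < ‖k w‖ := norm_pos_iff.2 hkw
    have hexpand : Real.log (‖h w‖) = Real.log t + Real.log r + Real.log (‖k w‖) := by
      rw [habsh]
      rw [Real.log_mul (mul_pos ht.1 hr0).ne' hkpos.ne', Real.log_mul ht.1.ne' hr0.ne']
    have hrk : Real.log (r * ‖k w‖) = Real.log r + Real.log (‖k w‖) :=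
      Real.log_mul hr0.ne' hkpos.ne'
    rw [hu, hG]
    simp only
    rw [hlogv2, hexpand, hrk]
    ring
  have hGtend : Filter.Tendsto G (nhdsWithin 0 (Set.Ioi (0:ℝ))) (nhds (Real.log r)) := by
    have h00 : ((0:ℝ):ℂ) * z = 0 := by simp
    have hcont : ContinuousAt G 0 := by
      have hk' : ContinuousAt k (((0:ℝ):ℂ) * z) := by
        rw [h00]
        exact hkd.continuousOn.continuousAt (isOpen_ball.mem_nhds (by simp))
      have hmulc : ContinuousAt (fun t : ℝ => ((t:ℂ) * z)) 0 :=
        (Complex.continuous_ofReal.continuousAt).mul continuousAt_const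
      have hkc : ContinuousAt (fun t : ℝ => k ((t:ℂ)*z)) 0 :=
        ContinuousAt.comp (g := k) (f := fun t : ℝ => (t:ℂ)*z) hk' hmulc
      have hc1 : ContinuousAt (fun t : ℝ => ‖k ((t:ℂ)*z)‖) 0 :=
        continuous_norm.continuousAt.comp hkc
      have hA : ContinuousAt (fun t : ℝ => r * ‖k ((t:ℂ)*z)‖) 0 :=
        continuousAt_const.mul hc1
      have hA0 : r * ‖k (((0:ℝ):ℂ)*z)‖ = r := by
        rw [h00, hk0]
        simp
      have hc2 : ContinuousAt (fun t : ℝ => Real.log (r * ‖k ((t:ℂ)*z)‖)) 0 := by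
        have hL : ContinuousAt Real.log (r * ‖k (((0:ℝ):ℂ)*z)‖) := by
          rw [hA0]
          exact Real.continuousAt_log hr0.ne'
        exact ContinuousAt.comp (g := Real.log) (f := fun t : ℝ => r * ‖k ((t:ℂ)*z)‖) hL hA
      have hB : ContinuousAt (fun t : ℝ => 1 + t * r) 0 :=
        continuousAt_const.add (continuousAt_id.mul continuousAt_const)
      have hc3 : ContinuousAt (fun t : ℝ => Real.log (1 + t*r)) 0 := by
        have hL : ContinuousAt Real.log (1 + (0:ℝ) * r) := by
          rw [zero_mul, add_zero]
          exact Real.continuousAt_log one_ne_zero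
        exact ContinuousAt.comp (g := Real.log) (f := fun t : ℝ => 1 + t * r) hL hB
      exact hc2.add (continuousAt_const.mul hc3)
    have hGval : G 0 = Real.log r := by
      rw [hG]
      simp only
      rw [h00, hk0]
      simp
    have := hcont.tendsto
    rw [hGval] at this
    exact this.mono_left nhdsWithin_le_nhds
  have hutend : Filter.Tendsto u (nhdsWithin 0 (Set.Ioi (0:ℝ))) (nhds (Real.log r)) := by
    apply hGtend.congr'
    filter_upwards [Ioo_mem_nhdsGT_of_mem (by constructor <;> norm_num : (0:ℝ) ∈ Set.Ico 0 1)] with t ht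
    exact (hueqG t ht).symm
  -- conclude log r ≤ u 1
  have hle : Real.log r ≤ u 1 := by
    apply le_of_tendsto hutend
    filter_upwards [Ioo_mem_nhdsGT_of_mem (by constructor <;> norm_num : (0:ℝ) ∈ Set.Ico 0 1)] with t ht
    exact humono ⟨ht.1, ht.2.le⟩ (by constructor <;> norm_num) ht.2.le
  -- evaluate u 1
  have hz1 : ((1:ℝ):ℂ) * z = z := by norm_num
  have hhz : h z ≠ 0 := hzne z hz hz0
  have habspos : 0 < ‖h z‖ := norm_pos_iff.2 hhz
  have hu1 : u 1 = Real.log (‖h z‖) + 2 * Real.log (1 + r) := by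
    rw [hu]
    simp only
    rw [show v 1 = ‖h z‖ ^ 2 by rw [hv]; simp only [hc, hz1]; exact Complex.normSq_eq_norm_sq _]
    rw [Real.log_pow, Real.log_one, one_mul]
    push_cast
    ring
  have hfinal : Real.log r ≤ Real.log ((1 + r)^2 * ‖h z‖) := by
    rw [Real.log_mul (by positivity) habspos.ne', Real.log_pow]
    rw [hu1] at hle
    push_cast
    linarith [hle]
  have := (Real.log_le_log_iff hr0 (by positivity)).1 hfinal
  exact this

lemma distortion_bound (h : ℂ → ℂ)
    (hd : DifferentiableOn ℂ h (Metric.ball (0:ℂ) 1))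
    (h0 : h 0 = 0) (h1 : deriv h 0 = 1)
    (hzne : ∀ z ∈ Metric.ball (0:ℂ) 1, z ≠ 0 → h z ≠ 0)
    (hRe : ∀ z ∈ Metric.ball (0:ℂ) 1,
      0 ≤ ((starRingEnd ℂ) z * h z * (starRingEnd ℂ) (deriv h z)).re) :
    ∀ z ∈ Metric.ball (0:ℂ) 1,
      (1 - ‖z‖) ≤ (1 + ‖z‖)^3 * ‖deriv h z‖ := by
  intro z hz
  rcases eq_or_ne z 0 with rfl | hz0
  · simp [h1]
  have hH := herglotz_bound h hd h0 h1 hzne hRe z hz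
  have hgrow := growth_bound h hd h0 h1 hzne hRe z hz
  obtain ⟨hpe, hher⟩ := hH
  set r := ‖z‖ with hr
  have hr0 : 0 < r := norm_pos_iff.2 hz0
  have hr1 : r < 1 := mem_ball_zero_iff.1 hz
  set P : ℂ := deriv h z / dslope h 0 z with hP
  set B := ‖h z‖ with hB
  set H := ‖deriv h z‖ with hH2
  have e1 : B * ‖P‖ = r * H := by
    have := congrArg (fun x : ℂ => ‖x‖) hpe
    rwa [norm_mul, norm_mul] at this
  have hPre : (1 - r) ≤ (1 + r) * ‖P‖ := by
    calc (1 - r) ≤ (1 + r) * P.re := hher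
    _ ≤ (1 + r) * ‖P‖ :=
      mul_le_mul_of_nonneg_left (Complex.re_le_norm P) (by linarith)
  have hPnn : 0 ≤ ‖P‖ := norm_nonneg _
  have c1 : r * (1 - r) ≤ r * ((1 + r) * ‖P‖) :=
    mul_le_mul_of_nonneg_left hPre hr0.le
  have c2 : r * ((1 + r) * ‖P‖) ≤ ((1 + r)^2 * B) * ((1 + r) * ‖P‖) :=
    mul_le_mul_of_nonneg_right hgrow (by positivity)
  have c3 : ((1 + r)^2 * B) * ((1 + r) * ‖P‖) = r * ((1 + r)^3 * H) := by
    have : ((1 + r)^2 * B) * ((1 + r) * ‖P‖) = (1+r)^3 * (B * ‖P‖) := by ring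
    rw [this, e1]
    ring
  have c4 : r * (1 - r) ≤ r * ((1 + r)^3 * H) := by linarith
  exact le_of_mul_le_mul_left c4 hr0

theorem stmt7
    (h g : ℂ → ℂ) (α : ℝ) (hα : α ∈ Set.Ico (0:ℝ) 1)
    (hd : DifferentiableOn ℂ h (Metric.ball (0:ℂ) 1))
    (gd : DifferentiableOn ℂ g (Metric.ball (0:ℂ) 1))
    (h0 : h 0 = 0) (h1 : deriv h 0 = 1) (g0 : g 0 = 0)
    (hb1 : ‖deriv g 0‖ = α)
    (hsp : ∀ z ∈ Metric.ball (0:ℂ) 1, ‖deriv g z‖ < ‖deriv h z‖)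
    (hinj : Set.InjOn h (Metric.ball (0:ℂ) 1))
    (hstar : ∀ w ∈ h '' (Metric.ball (0:ℂ) 1), segment ℝ 0 w ⊆ h '' (Metric.ball (0:ℂ) 1))
 :
    ∀ z ∈ Metric.ball (0:ℂ) 1, ‖z‖ < α →
      (α - ‖z‖) * (1 - ‖z‖) / ((1 - α * ‖z‖) * (1 + ‖z‖) ^ 3)
        ≤ ‖deriv g z‖ := by
  obtain ⟨hα0, hα1⟩ := hα
  have hne : ∀ w ∈ Metric.ball (0:ℂ) 1, deriv h w ≠ 0 := by
    intro w hw hc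
    have hlt := hsp w hw
    rw [hc, norm_zero] at hlt
    exact absurd hlt (norm_nonneg _).not_gt
  have hzne : ∀ w ∈ Metric.ball (0:ℂ) 1, w ≠ 0 → h w ≠ 0 := by
    intro w hw hw0 hc
    have h01 : (0:ℂ) ∈ Metric.ball (0:ℂ) 1 := by simp
    exact hw0 (hinj hw h01 (by rw [hc, h0]))
  have hRe := re_condition h hd h0 hne hinj hstar
  have hdist := distortion_bound h hd h0 h1 hzne hRe
  set ω : ℂ → ℂ := fun w => deriv g w / deriv h w with hω
  have hgd' : DifferentiableOn ℂ (deriv g) (Metric.ball (0:ℂ) 1) :=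
    ((gd.analyticOnNhd isOpen_ball).deriv).differentiableOn
  have hhd' : DifferentiableOn ℂ (deriv h) (Metric.ball (0:ℂ) 1) :=
    ((hd.analyticOnNhd isOpen_ball).deriv).differentiableOn
  have hωd : DifferentiableOn ℂ ω (Metric.ball (0:ℂ) 1) := hgd'.div hhd' hne
  have hωmaps : Set.MapsTo ω (Metric.ball (0:ℂ) 1) (Metric.ball (0:ℂ) 1) := by
    intro w hw
    rw [mem_ball_zero_iff]
    show ‖deriv g w / deriv h w‖ < 1
    rw [norm_div, div_lt_one (norm_pos_iff.2 (hne w hw))]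
    exact hsp w hw
  have hω0 : ‖ω 0‖ = α := by
    rw [hω]
    simp only
    rw [norm_div, h1, hb1]
    simp
  have hSP := schwarz_pick_lower ω α hα0 hα1 hωd hωmaps hω0
  intro z hz hzα
  set r := ‖z‖ with hr
  have hr0 : 0 ≤ r := norm_nonneg z
  have hr1 : r < 1 := mem_ball_zero_iff.1 hz
  have hsp' := hSP z hz
  have hdistz := hdist z hz
  have hωabs : ‖ω z‖ * ‖deriv h z‖ = ‖deriv g z‖ := by
    rw [← norm_mul]
    congr 1
    exact div_mul_cancel₀ _ (hne z hz)
  have hBpos : 0 < 1 - α * r := by nlinarith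
  have hden : 0 < (1 - α * r) * (1 + r)^3 := by positivity
  rw [div_le_iff₀ hden]
  have m1 : (α - r) * (1 - r) ≤ (‖ω z‖ * (1 - α * r)) * ((1 + r)^3 * ‖deriv h z‖) := by
    apply mul_le_mul hsp' hdistz (by linarith) (by positivity)
  have m2 : (‖ω z‖ * (1 - α * r)) * ((1 + r)^3 * ‖deriv h z‖)
      = ‖deriv g z‖ * ((1 - α * r) * (1 + r)^3) := by
    rw [← hωabs]
    ring
  linarith [m1, m2]
end

section
/- Let f = h + conj(g) ∈ Ľ_H^α. Then for all z ∈ Δ, |g'(z)| ≤ (α + |z|)(1 + |z|) / ((1 + α|z|)(1 - |z|)³). -/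
open Metric Set Complex Filter

-- Schwarz: bounded-by-1, fixes 0 ⇒ |f z| ≤ |z|
lemma aux_schwarz1 {f : ℂ → ℂ} (hf : DifferentiableOn ℂ f (ball 0 1))
    (hb : ∀ w ∈ ball (0:ℂ) 1, ‖f w‖ ≤ 1) (h0 : f 0 = 0)
    {z : ℂ} (hz : z ∈ ball (0:ℂ) 1) : ‖f z‖ ≤ ‖z‖ := by
  have hz1 : ‖z‖ < 1 := mem_ball_zero_iff.1 hz
  refine le_of_forall_pos_le_add fun ε hε => ?_
  have hmaps : MapsTo f (ball 0 1) (ball (f 0) (1 + ε)) := by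
    intro w hw
    rw [h0, mem_ball_zero_iff]
    exact lt_of_le_of_lt (hb w hw) (by linarith)
  have := Complex.dist_le_div_mul_dist_of_mapsTo_ball hf (hmaps.mono_right ball_subset_closedBall) hz
  rw [h0, dist_zero_right, dist_zero_right] at this
  calc ‖f z‖ ≤ (1+ε)/1 * ‖z‖ := this
    _ = ‖z‖ + ε * ‖z‖ := by ring
    _ ≤ ‖z‖ + ε := by nlinarith [norm_nonneg z]

-- Schwarz–Pick value bound
lemma aux_sp {ω : ℂ → ℂ} (hω : DifferentiableOn ℂ ω (ball 0 1))
    (hm : ∀ w ∈ ball (0:ℂ) 1, ‖ω w‖ < 1)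
    {z : ℂ} (hz : z ∈ ball (0:ℂ) 1) :
    ‖ω z‖ * (1 + ‖ω 0‖ * ‖z‖)
      ≤ ‖ω 0‖ + ‖z‖ := by
  set a := ω 0 with ha
  have h0b : (0:ℂ) ∈ ball (0:ℂ) 1 := by simp
  have hα : ‖a‖ < 1 := hm 0 h0b
  set F : ℂ → ℂ := fun w => (ω w - a) / (1 - (starRingEnd ℂ) a * ω w) with hF
  have hden : ∀ w ∈ ball (0:ℂ) 1, 1 - (starRingEnd ℂ) a * ω w ≠ 0 := by
    intro w hw hcon
    have h1 : ‖(starRingEnd ℂ) a * ω w‖ < 1 := by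
      rw [norm_mul, Complex.norm_conj]
      nlinarith [norm_nonneg a, norm_nonneg (ω w), hm w hw]
    rw [sub_eq_zero] at hcon
    rw [← hcon] at h1
    simp at h1
  have hFd : DifferentiableOn ℂ F (ball 0 1) := by
    apply DifferentiableOn.div
    · exact hω.sub_const a
    · exact (differentiableOn_const _).sub ((differentiableOn_const _).mul hω)
    · exact hden
  have key : ∀ w : ℂ, Complex.normSq (1 - (starRingEnd ℂ) a * w) - Complex.normSq (w - a)
      = (1 - Complex.normSq a) * (1 - Complex.normSq w) := by
    intro w
    simp only [Complex.normSq_apply, Complex.sub_re, Complex.sub_im, Complex.one_re,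
      Complex.one_im, Complex.mul_re, Complex.mul_im, Complex.conj_re, Complex.conj_im]
    ring
  have hFb : ∀ w ∈ ball (0:ℂ) 1, ‖F w‖ ≤ 1 := by
    intro w hw
    have hnum : ‖ω w - a‖ ≤ ‖1 - (starRingEnd ℂ) a * ω w‖ := by
      have hk := key (ω w)
      have h1 : Complex.normSq (ω w) ≤ 1 := by
        rw [← Complex.sq_norm]; nlinarith [norm_nonneg (ω w), hm w hw]
      have h2 : Complex.normSq a ≤ 1 := by
        rw [← Complex.sq_norm]; nlinarith [norm_nonneg a]
      have : Complex.normSq (ω w - a) ≤ Complex.normSq (1 - (starRingEnd ℂ) a * ω w) := by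
        nlinarith [Complex.normSq_nonneg (ω w - a)]
      rw [Complex.norm_def, Complex.norm_def]
      exact Real.sqrt_le_sqrt this
    show ‖(ω w - a) / (1 - (starRingEnd ℂ) a * ω w)‖ ≤ 1
    rw [norm_div]
    exact div_le_one_of_le₀ hnum (norm_nonneg _)
  have hF0 : F 0 = 0 := by rw [hF]; simp [← ha]
  have hFz := aux_schwarz1 hFd hFb hF0 hz
  -- unfold : |ω z - a| ≤ |z| * |1 - conj a * ω z|
  have habs : ‖ω z - a‖ ≤ ‖z‖ * ‖1 - (starRingEnd ℂ) a * ω z‖ := by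
    have := hFz
    rw [hF, norm_div, div_le_iff₀ (by
      have := hden z hz
      exact (norm_pos_iff.2 this))] at this
    linarith [this]
  -- squared version
  set A := ‖ω z‖ with hA
  set r := ‖z‖ with hr
  set α := ‖a‖ with hαd
  set R := ((starRingEnd ℂ) a * ω z).re with hRd
  have hRb : |R| ≤ α * A := by
    calc |R| ≤ ‖(starRingEnd ℂ) a * ω z‖ := Complex.abs_re_le_norm _
      _ = α * A := by rw [norm_mul, Complex.norm_conj]
  have hA1 : A < 1 := hm z hz
  have hr1 : r < 1 := mem_ball_zero_iff.1 hz
  have hA0 : 0 ≤ A := norm_nonneg _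
  have hr0 : 0 ≤ r := norm_nonneg _
  have hα0 : 0 ≤ α := norm_nonneg _
  have hsq1 : Complex.normSq (ω z - a) = A^2 - 2*R + α^2 := by
    simp only [hA, hαd, hRd, ← Complex.sq_norm, Complex.normSq_apply, Complex.sub_re,
      Complex.sub_im, Complex.mul_re, Complex.mul_im, Complex.conj_re, Complex.conj_im,
      Complex.sq_norm]
    simp [Complex.normSq_apply]; ring
  have hsq2 : Complex.normSq (1 - (starRingEnd ℂ) a * ω z) = 1 - 2*R + α^2*A^2 := by
    simp only [hA, hαd, hRd, ← Complex.sq_norm, Complex.normSq_apply, Complex.sub_re,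
      Complex.sub_im, Complex.one_re, Complex.one_im, Complex.mul_re, Complex.mul_im,
      Complex.conj_re, Complex.conj_im, Complex.sq_norm]
    simp [Complex.normSq_apply]; ring
  have hE : A^2 - 2*R + α^2 ≤ r^2 * (1 - 2*R + α^2*A^2) := by
    have h2 : Complex.normSq (ω z - a) ≤ r^2 * Complex.normSq (1 - (starRingEnd ℂ) a * ω z) := by
      rw [← Complex.sq_norm, ← Complex.sq_norm]
      nlinarith [habs, norm_nonneg (ω z - a), norm_nonneg (1 - (starRingEnd ℂ) a * ω z), hr0]
    rw [hsq1, hsq2] at h2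
    exact h2
  have hRA : R ≤ α * A := (abs_le.1 hRb).2
  clear hsq1 hsq2 hRb hFz habs hF0 hFb key hFd hden hF hω hm hz h0b ha hA hr hαd hRd
  by_contra hcon
  push_neg at hcon
  have hr2 : (0:ℝ) < 1 - r^2 := by nlinarith
  have hP : ((1+α*r)*A - (α+r)) * ((1-α*r)*A + (r-α)) ≤ 0 := by
    nlinarith [mul_nonneg (by linarith : (0:ℝ) ≤ α*A - R) (le_of_lt hr2)]
  have hX : 0 < (1+α*r)*A - (α+r) := by nlinarith [mul_nonneg hα0 hr0]
  have hY : (1-α*r)*A + (r-α) ≤ 0 := by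
    by_contra hY'
    push_neg at hY'
    nlinarith [mul_pos hX hY']
  have hpos : (0:ℝ) < 1 - α*r := by nlinarith
  nlinarith [mul_le_mul_of_nonneg_left hY (by nlinarith : (0:ℝ) ≤ 1+α*r),
    mul_lt_mul_of_pos_left hX hpos, mul_nonneg hr0 (by nlinarith : (0:ℝ) ≤ 1 - α^2)]

-- Carathéodory: Re p ≥ 0, p 0 = 1 ⇒ |p z - 1| ≤ |z| |p z + 1|
lemma aux_carath {p : ℂ → ℂ} (hp : DifferentiableOn ℂ p (ball 0 1))
    (hre : ∀ w ∈ ball (0:ℂ) 1, 0 ≤ (p w).re) (hp0 : p 0 = 1)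
    {z : ℂ} (hz : z ∈ ball (0:ℂ) 1) :
    ‖p z - 1‖ ≤ ‖z‖ * ‖p z + 1‖ := by
  have hne : ∀ w ∈ ball (0:ℂ) 1, p w + 1 ≠ 0 := by
    intro w hw hc
    have : (p w + 1).re = 0 := by rw [hc]; simp
    have := hre w hw
    simp [Complex.add_re] at *
    linarith
  set ψ : ℂ → ℂ := fun w => (p w - 1) / (p w + 1) with hψ
  have hψd : DifferentiableOn ℂ ψ (ball 0 1) :=
    (hp.sub_const 1).div (hp.add_const 1) hne
  have hψb : ∀ w ∈ ball (0:ℂ) 1, ‖ψ w‖ ≤ 1 := by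
    intro w hw
    show ‖(p w - 1) / (p w + 1)‖ ≤ 1
    rw [norm_div]
    apply div_le_one_of_le₀ _ (norm_nonneg _)
    have h1 : Complex.normSq (p w - 1) ≤ Complex.normSq (p w + 1) := by
      have := hre w hw
      simp only [Complex.normSq_apply, Complex.sub_re, Complex.sub_im, Complex.add_re,
        Complex.add_im, Complex.one_re, Complex.one_im]
      nlinarith
    rw [Complex.norm_def, Complex.norm_def]
    exact Real.sqrt_le_sqrt h1
  have hψ0 : ψ 0 = 0 := by simp [hψ, hp0]
  have := aux_schwarz1 hψd hψb hψ0 hz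
  rw [hψ] at this
  simp only at this
  rw [norm_div, div_le_iff₀ (norm_pos_iff.2 (hne z hz))] at this
  linarith

-- consequences
lemma aux_carath2 {p : ℂ → ℂ} (hp : DifferentiableOn ℂ p (ball 0 1))
    (hre : ∀ w ∈ ball (0:ℂ) 1, 0 ≤ (p w).re) (hp0 : p 0 = 1)
    {z : ℂ} (hz : z ∈ ball (0:ℂ) 1) :
    ‖p z‖ * (1 - ‖z‖) ≤ 1 + ‖z‖ ∧
    ‖p z - 1‖ * (1 - ‖z‖) ≤ 2 * ‖z‖ := by
  have h1 := aux_carath hp hre hp0 hz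
  have hr1 : ‖z‖ < 1 := mem_ball_zero_iff.1 hz
  have hr0 : (0:ℝ) ≤ ‖z‖ := norm_nonneg _
  have t1 : ‖p z‖ - 1 ≤ ‖p z - 1‖ := by
    calc ‖p z‖ - 1 = ‖p z - 1 + 1‖ - 1 := by ring_nf
      _ ≤ (‖p z - 1‖ + ‖(1:ℂ)‖) - 1 := by
          linarith [norm_add_le (p z - 1) 1]
      _ = ‖p z - 1‖ := by simp
  have t2 : ‖p z + 1‖ ≤ ‖p z‖ + 1 := by
    have := norm_add_le (p z) 1
    simpa using this
  have hPb : ‖p z‖ * (1 - ‖z‖) ≤ 1 + ‖z‖ := by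
    nlinarith [norm_nonneg (p z)]
  constructor
  · exact hPb
  · nlinarith [norm_nonneg (p z), norm_nonneg (p z - 1)]

lemma aux_strict {h : ℂ → ℂ} (hd : DifferentiableOn ℂ h (ball 0 1))
    {w : ℂ} (hw : w ∈ ball (0:ℂ) 1) : HasStrictDerivAt h (deriv h w) w := by
  have hAn : AnalyticAt ℂ h w := hd.analyticOnNhd isOpen_ball w hw
  obtain ⟨pp, hpp⟩ := hAn
  have hs := hpp.hasStrictDerivAt
  have hv := hs.hasDerivAt.deriv
  rwa [← hv] at hs

-- the dilation map: for t ∈ (0,1) there is a preimage of t·h(z) with modulus ≤ |z|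
lemma aux_sigma {h : ℂ → ℂ} (hd : DifferentiableOn ℂ h (ball 0 1)) (h0 : h 0 = 0)
    (hprime : ∀ w ∈ ball (0:ℂ) 1, deriv h w ≠ 0)
    (hinj : InjOn h (ball (0:ℂ) 1))
    (hstar : ∀ w ∈ h '' (ball (0:ℂ) 1), segment ℝ 0 w ⊆ h '' (ball (0:ℂ) 1))
    {t : ℝ} (ht : t ∈ Ioo (0:ℝ) 1) :
    ∀ z ∈ ball (0:ℂ) 1, ∃ u ∈ ball (0:ℂ) 1,
      h u = (t:ℂ) * h z ∧ ‖u‖ ≤ ‖z‖ := by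
  have h0mem : (0:ℂ) ∈ ball (0:ℂ) 1 := by simp
  have hmem : ∀ w ∈ ball (0:ℂ) 1, (t:ℂ) * h w ∈ h '' (ball (0:ℂ) 1) := by
    intro w hw
    apply hstar (h w) ⟨w, hw, rfl⟩
    rw [segment_eq_image]
    exact ⟨t, ⟨le_of_lt ht.1, le_of_lt ht.2⟩, by simp [Complex.real_smul]⟩
  classical
  set σ : ℂ → ℂ := fun w => if hw : w ∈ ball (0:ℂ) 1 then (hmem w hw).choose else 0 with hσ
  have hσball : ∀ w (hw : w ∈ ball (0:ℂ) 1), σ w ∈ ball (0:ℂ) 1 := by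
    intro w hw
    rw [hσ]; simp only [dif_pos hw]
    exact (hmem w hw).choose_spec.1
  have hσim : ∀ w (hw : w ∈ ball (0:ℂ) 1), h (σ w) = (t:ℂ) * h w := by
    intro w hw
    rw [hσ]; simp only [dif_pos hw]
    exact (hmem w hw).choose_spec.2
  have hσ0 : σ 0 = 0 := by
    apply hinj (hσball 0 h0mem) h0mem
    rw [hσim 0 h0mem, h0, mul_zero]
  have hσd : DifferentiableOn ℂ σ (ball 0 1) := by
    intro z₀ hz₀
    suffices hda : DifferentiableAt ℂ σ z₀ from hda.differentiableWithinAt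
    have hw₀ : σ z₀ ∈ ball (0:ℂ) 1 := hσball z₀ hz₀
    set w₀ := σ z₀
    have hs : HasStrictDerivAt h (deriv h w₀) w₀ := aux_strict hd hw₀
    have hne : deriv h w₀ ≠ 0 := hprime w₀ hw₀
    have Φ := hs.hasStrictFDerivAt_equiv hne
    set G : ℂ → ℂ := hs.localInverse h (deriv h w₀) w₀ hne with hG
    have hGd : HasStrictDerivAt G (deriv h w₀)⁻¹ (h w₀) := hs.to_localInverse hne
    have ev1 : ∀ᶠ y in nhds (h w₀), h (G y) = y := Φ.eventually_right_inverse
    have ev2 : ∀ᶠ y in nhds (h w₀), G y ∈ ball (0:ℂ) 1 := by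
      have hcont : ContinuousAt G (h w₀) := Φ.localInverse_continuousAt
      have : G (h w₀) = w₀ := Φ.localInverse_apply_image
      have := hcont.preimage_mem_nhds (isOpen_ball.mem_nhds (by rwa [this] ))
      exact this
    have hcont2 : ContinuousAt (fun w => (t:ℂ) * h w) z₀ :=
      (continuousAt_const.mul (hd.differentiableAt
        (isOpen_ball.mem_nhds hz₀)).continuousAt)
    have him : (t:ℂ) * h z₀ = h w₀ := (hσim z₀ hz₀).symm
    have ev3 : ∀ᶠ w in nhds z₀, h (G ((t:ℂ) * h w)) = (t:ℂ) * h w ∧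
        G ((t:ℂ) * h w) ∈ ball (0:ℂ) 1 := by
      have := hcont2.tendsto
      rw [him] at this
      exact this.eventually (ev1.and ev2)
    have ev4 : ∀ᶠ w in nhds z₀, σ w = G ((t:ℂ) * h w) := by
      filter_upwards [ev3, isOpen_ball.mem_nhds hz₀] with w hw hwball
      exact hinj (hσball w hwball) hw.2 (by rw [hσim w hwball, hw.1])
    have hdGc : DifferentiableAt ℂ (fun w => G ((t:ℂ) * h w)) z₀ := by
      have hG' : DifferentiableAt ℂ G ((t:ℂ) * h z₀) := by
        rw [him]; exact hGd.hasDerivAt.differentiableAt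
      exact hG'.comp z₀ ((differentiableAt_const _).mul
        (hd.differentiableAt (isOpen_ball.mem_nhds hz₀)))
    exact hdGc.congr_of_eventuallyEq ev4
  have hmaps : MapsTo σ (ball 0 1) (ball 0 1) := fun w hw => hσball w hw
  intro z hz
  refine ⟨σ z, hσball z hz, hσim z hz, ?_⟩
  have := Complex.norm_le_norm_of_mapsTo_ball hσd (hmaps.mono_right ball_subset_closedBall) hσ0 (mem_ball_zero_iff.1 hz)
  exact this

lemma aux_repos {h : ℂ → ℂ} (hd : DifferentiableOn ℂ h (ball 0 1)) (h0 : h 0 = 0)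
    (hprime : ∀ w ∈ ball (0:ℂ) 1, deriv h w ≠ 0)
    (hinj : InjOn h (ball (0:ℂ) 1))
    (hstar : ∀ w ∈ h '' (ball (0:ℂ) 1), segment ℝ 0 w ⊆ h '' (ball (0:ℂ) 1))
    {z : ℂ} (hz : z ∈ ball (0:ℂ) 1) (hz0 : z ≠ 0) :
    0 ≤ (z * deriv h z / h z).re := by
  have h0mem : (0:ℂ) ∈ ball (0:ℂ) 1 := by simp
  have hhz : h z ≠ 0 := by
    intro hc
    exact hz0 (hinj hz h0mem (by rw [hc, h0]))
  have hne : deriv h z ≠ 0 := hprime z hz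
  have hs : HasStrictDerivAt h (deriv h z) z := aux_strict hd hz
  have Φ := hs.hasStrictFDerivAt_equiv hne
  set G : ℂ → ℂ := hs.localInverse h (deriv h z) z hne with hG
  have hGd : HasStrictDerivAt G (deriv h z)⁻¹ (h z) := hs.to_localInverse hne
  have hG0 : G (h z) = z := Φ.localInverse_apply_image
  -- η s = G ((1-s) h z)
  set c : ℝ → ℂ := fun s => (1 - (s:ℂ)) * h z with hc
  have hc0 : c 0 = h z := by simp [hc]
  set η : ℝ → ℂ := fun s => G (c s) with hη
  have hη0 : η 0 = z := by rw [hη]; simp only [hc0]; exact hG0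
  -- derivative of η at 0
  have hcd : HasDerivAt c (-(h z)) 0 := by
    have h1 : HasDerivAt (fun s : ℂ => (1 - s) * h z) (-(h z)) 0 := by
      simpa using (((hasDerivAt_id (0:ℂ)).const_sub 1).mul_const (h z))
    exact h1.comp_ofReal
  have hηd : HasDerivAt η (-(h z) * (deriv h z)⁻¹) 0 := by
    have hGf := hGd.hasDerivAt.hasFDerivAt.restrictScalars ℝ
    rw [← hc0] at hGf
    have := hGf.comp_hasDerivAt (0:ℝ) hcd
    simpa [hη, Function.comp_def] using this
  -- slope tends to derivative
  have hslope : Tendsto (slope η 0) (nhdsWithin 0 (Ioi 0)) (nhds (-(h z) * (deriv h z)⁻¹)) := by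
    have := hasDerivAt_iff_tendsto_slope.1 hηd
    exact this.mono_left (nhdsWithin_mono 0 (fun x hx => ne_of_gt hx))
  -- the real quantity
  have hT : Tendsto (fun s => ((starRingEnd ℂ) z * -(slope η 0 s)).re)
      (nhdsWithin 0 (Ioi 0)) (nhds (((starRingEnd ℂ) z * (h z * (deriv h z)⁻¹)).re)) := by
    have h1 : Tendsto (fun s => (starRingEnd ℂ) z * -(slope η 0 s)) (nhdsWithin 0 (Ioi 0))
        (nhds ((starRingEnd ℂ) z * (h z * (deriv h z)⁻¹))) := by
      have := (hslope.neg).const_mul ((starRingEnd ℂ) z)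
      simpa [neg_mul] using this
    exact (Complex.continuous_re.tendsto _).comp h1
  -- eventually nonneg
  have hev : ∀ᶠ s in nhdsWithin (0:ℝ) (Ioi 0),
      0 ≤ ((starRingEnd ℂ) z * -(slope η 0 s)).re := by
    have ev1 : ∀ᶠ y in nhds (h z), h (G y) = y := Φ.eventually_right_inverse
    have ev2 : ∀ᶠ y in nhds (h z), G y ∈ ball (0:ℂ) 1 := by
      have hcont : ContinuousAt G (h z) := Φ.localInverse_continuousAt
      exact hcont.preimage_mem_nhds (isOpen_ball.mem_nhds (by rwa [hG0]))
    have hcc : Tendsto c (nhds 0) (nhds (h z)) := by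
      have := hcd.continuousAt.tendsto
      rwa [hc0] at this
    have ev3 : ∀ᶠ s in nhds (0:ℝ), h (η s) = c s ∧ η s ∈ ball (0:ℂ) 1 :=
      hcc.eventually (ev1.and ev2)
    have ev4 : ∀ᶠ s in nhdsWithin (0:ℝ) (Ioi 0), s ∈ Ioo (0:ℝ) 1 := by
      apply Ioo_mem_nhdsGT_of_mem
      constructor <;> norm_num
    filter_upwards [ev4, eventually_nhdsWithin_of_eventually_nhds ev3] with s hs1 hs2
    -- |η s| ≤ |z|
    have habs : ‖η s‖ ≤ ‖z‖ := by
      obtain ⟨u, hub, huim, hule⟩ := aux_sigma hd h0 hprime hinj hstar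
        (⟨by linarith [hs1.2], by linarith [hs1.1]⟩ : (1-s) ∈ Ioo (0:ℝ) 1) z hz
      have : η s = u := by
        apply hinj hs2.2 hub
        rw [hs2.1, huim, hc]
        push_cast
        ring
      rw [this]; exact hule
    -- compute
    have hslope_eq : slope η 0 s = (s:ℂ)⁻¹ * (η s - z) := by
      rw [slope_def_module, hη0, sub_zero, Complex.real_smul, Complex.ofReal_inv]
    rw [hslope_eq]
    have hre : ((starRingEnd ℂ) z * -((s:ℂ)⁻¹ * (η s - z))).re
        = s⁻¹ * (Complex.normSq z - ((starRingEnd ℂ) z * η s).re) := by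
      have : (starRingEnd ℂ) z * -((s:ℂ)⁻¹ * (η s - z))
          = (s⁻¹:ℝ) • ((starRingEnd ℂ) z * (z - η s)) := by
        rw [Complex.real_smul]
        push_cast
        ring
      rw [this, Complex.real_smul]
      rw [Complex.re_ofReal_mul]
      congr 1
      have hzz : ((starRingEnd ℂ) z * z).re = Complex.normSq z := by
        rw [mul_comm, Complex.mul_conj]
        simp
      rw [mul_sub, Complex.sub_re, hzz]
    rw [hre]
    apply mul_nonneg (inv_nonneg.2 (le_of_lt hs1.1))
    have h1 : ((starRingEnd ℂ) z * η s).re ≤ ‖z‖ * ‖η s‖ := by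
      calc ((starRingEnd ℂ) z * η s).re ≤ ‖(starRingEnd ℂ) z * η s‖ :=
            Complex.re_le_norm _
        _ = ‖z‖ * ‖η s‖ := by rw [norm_mul, Complex.norm_conj]
    have h2 : ‖z‖ * ‖η s‖ ≤ Complex.normSq z := by
      rw [Complex.normSq_eq_norm_sq]
      nlinarith [norm_nonneg z]
    linarith
  -- pass to the limit
  have hlim : 0 ≤ ((starRingEnd ℂ) z * (h z * (deriv h z)⁻¹)).re :=
    ge_of_tendsto hT hev
  -- convert to the goal
  have hkey : z * deriv h z / h z
      = ((Complex.normSq z : ℂ)) * ((starRingEnd ℂ) z * (h z * (deriv h z)⁻¹))⁻¹ := by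
    have hzc : (starRingEnd ℂ) z ≠ 0 := by simpa using hz0
    have hNS : ((Complex.normSq z : ℂ)) = z * (starRingEnd ℂ) z := (Complex.mul_conj z).symm
    rw [hNS]
    field_simp
  rw [hkey]
  rw [show ((Complex.normSq z : ℂ)) * ((starRingEnd ℂ) z * (h z * (deriv h z)⁻¹))⁻¹
      = (Complex.normSq z : ℝ) • ((starRingEnd ℂ) z * (h z * (deriv h z)⁻¹))⁻¹ by
    rw [Complex.real_smul]]
  rw [Complex.real_smul, Complex.re_ofReal_mul]
  apply mul_nonneg (Complex.normSq_nonneg z)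
  rw [Complex.inv_re]
  exact div_nonneg hlim (Complex.normSq_nonneg _)

-- distortion theorem for starlike functions
lemma aux_distortion {h : ℂ → ℂ} (hd : DifferentiableOn ℂ h (ball 0 1)) (h0 : h 0 = 0)
    (h1 : deriv h 0 = 1)
    (hprime : ∀ w ∈ ball (0:ℂ) 1, deriv h w ≠ 0)
    (hinj : InjOn h (ball (0:ℂ) 1))
    (hstar : ∀ w ∈ h '' (ball (0:ℂ) 1), segment ℝ 0 w ⊆ h '' (ball (0:ℂ) 1))
    {z : ℂ} (hz : z ∈ ball (0:ℂ) 1) :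
    ‖deriv h z‖ * (1 - ‖z‖)^3 ≤ 1 + ‖z‖ := by
  have h0mem : (0:ℂ) ∈ ball (0:ℂ) 1 := by simp
  set q : ℂ → ℂ := dslope h 0 with hqdef
  have qd : DifferentiableOn ℂ q (ball 0 1) :=
    (differentiableOn_dslope (isOpen_ball.mem_nhds h0mem)).mpr hd
  have q0 : q 0 = 1 := by rw [hqdef, dslope_same, h1]
  have hq : ∀ w : ℂ, h w = w * q w := by
    intro w
    have := sub_smul_dslope h 0 w
    rw [h0, sub_zero, sub_zero, smul_eq_mul] at this
    rw [← this, hqdef]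
  have qne : ∀ w ∈ ball (0:ℂ) 1, q w ≠ 0 := by
    intro w hw hc
    rcases eq_or_ne w 0 with rfl | hw0
    · rw [q0] at hc; exact one_ne_zero hc
    · have : h w = 0 := by rw [hq w, hc, mul_zero]
      exact hw0 (hinj hw h0mem (by rw [this, h0]))
  have hAn : AnalyticOnNhd ℂ h (ball 0 1) := hd.analyticOnNhd isOpen_ball
  have derivd : DifferentiableOn ℂ (deriv h) (ball 0 1) :=
    (hAn.deriv).differentiableOn
  set p : ℂ → ℂ := fun w => deriv h w / q w with hpdef
  have pd : DifferentiableOn ℂ p (ball 0 1) := derivd.div qd qne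
  have p0 : p 0 = 1 := by rw [hpdef]; simp [q0, h1]
  have hpq : ∀ w ∈ ball (0:ℂ) 1, deriv h w = p w * q w := by
    intro w hw
    rw [hpdef]
    exact (div_mul_cancel₀ _ (qne w hw)).symm
  have hrep : ∀ w ∈ ball (0:ℂ) 1, 0 ≤ (p w).re := by
    intro w hw
    rcases eq_or_ne w 0 with rfl | hw0
    · rw [p0]; norm_num
    · have hrp := aux_repos hd h0 hprime hinj hstar hw hw0
      have heq : p w = w * deriv h w / h w := by
        rw [hpdef]
        have : h w = w * q w := hq w
        rw [this]
        field_simp [qne w hw, hw0]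
      rw [heq]
      exact hrp
  -- Carathéodory bounds
  have carath := fun w (hw : w ∈ ball (0:ℂ) 1) => aux_carath2 pd hrep p0 hw
  -- derivative of q relation:  deriv h w = q w + w * deriv q w
  have hqderiv : ∀ w ∈ ball (0:ℂ) 1, deriv h w = q w + w * deriv q w := by
    intro w hw
    have hqw : DifferentiableAt ℂ q w := qd.differentiableAt (isOpen_ball.mem_nhds hw)
    have hmul : HasDerivAt (fun u : ℂ => u * q u) (1 * q w + w * deriv q w) w :=
      (hasDerivAt_id w).mul hqw.hasDerivAt
    have : deriv h w = deriv (fun u : ℂ => u * q u) w := by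
      congr 1
      funext u
      exact hq u
    rw [this, hmul.deriv, one_mul]
  -- growth: normSq (q z) * (1-r)^4 ≤ 1
  set r : ℝ := ‖z‖ with hrdef
  have hr1 : r < 1 := mem_ball_zero_iff.1 hz
  have hr0 : 0 ≤ r := norm_nonneg _
  have hmem : ∀ t ∈ Icc (0:ℝ) 1, (t:ℂ) * z ∈ ball (0:ℂ) 1 := by
    intro t ht
    rw [mem_ball_zero_iff]
    have hno : ‖(t:ℂ) * z‖ = t * r := by
      rw [norm_mul, Complex.norm_real, Real.norm_eq_abs, _root_.abs_of_nonneg ht.1, hrdef]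
    rw [hno]
    nlinarith [ht.2]
  set Q : ℝ → ℝ := fun t => Complex.normSq (q ((t:ℂ) * z)) with hQdef
  set F : ℝ → ℝ := fun t => Q t * (1 - t*r)^4 with hFdef
  -- continuity
  have hQc : ContinuousOn Q (Icc 0 1) := by
    apply Complex.continuous_normSq.comp_continuousOn
    apply qd.continuousOn.comp
    · exact (continuous_ofReal.mul continuous_const).continuousOn
    · intro t ht
      exact hmem t ht
  have hFc : ContinuousOn F (Icc 0 1) :=
    hQc.mul ((continuous_const.sub (continuous_id.mul continuous_const)).pow 4).continuousOn
  -- derivative data on Ioo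
  have hFderiv : ∀ t ∈ Ioo (0:ℝ) 1, HasDerivAt F
      (2 * t⁻¹ * ((p ((t:ℂ)*z) - 1).re * Q t) * (1 - t*r)^4
        + Q t * (4*(1 - t*r)^3 * (0 - 1*r))) t := by
    intro t ht
    have hw : (t:ℂ) * z ∈ ball (0:ℂ) 1 := hmem t ⟨ht.1.le, ht.2.le⟩
    set w := (t:ℂ) * z with hwdef
    have hqw : DifferentiableAt ℂ q w := qd.differentiableAt (isOpen_ball.mem_nhds hw)
    have hinner : HasDerivAt (fun s : ℝ => (s:ℂ) * z) z t := by
      simpa using ((hasDerivAt_id ((t:ℝ):ℂ)).mul_const z).comp_ofReal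
    have hcq : HasDerivAt (fun s : ℝ => q ((s:ℂ) * z)) (z * deriv q w) t := by
      have hf := hqw.hasDerivAt.hasFDerivAt.restrictScalars ℝ
      have := hf.comp_hasDerivAt t hinner
      simpa [smul_eq_mul, mul_comm, Function.comp_def] using this
    -- key value identity
    have hkey : z * deriv q w = (t:ℝ)⁻¹ • ((p w - 1) * q w) := by
      have ht0 : (t:ℂ) ≠ 0 := by
        simp only [ne_eq, Complex.ofReal_eq_zero]
        exact ne_of_gt ht.1
      have h1' : w * deriv q w = (p w - 1) * q w := by
        have e1 : (p w - 1) * q w = deriv h w - q w := by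
          rw [hpdef, sub_mul, div_mul_cancel₀ _ (qne w hw), one_mul]
        rw [e1]
        linear_combination -(hqderiv w hw)
      rw [Complex.real_smul, Complex.ofReal_inv, ← h1', hwdef]
      field_simp
    -- derivative of Q
    have hQd : HasDerivAt Q (2 * t⁻¹ * ((p w - 1).re * Q t)) t := by
      have hre' : HasDerivAt (fun s : ℝ => (q ((s:ℂ)*z)).re) ((z * deriv q w).re) t := by
        have := (Complex.reCLM.hasFDerivAt (x := q ((t:ℂ)*z))).comp_hasDerivAt t hcq
        simpa [Function.comp_def] using this
      have him' : HasDerivAt (fun s : ℝ => (q ((s:ℂ)*z)).im) ((z * deriv q w).im) t := by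
        have := (Complex.imCLM.hasFDerivAt (x := q ((t:ℂ)*z))).comp_hasDerivAt t hcq
        simpa [Function.comp_def] using this
      have hsum := (hre'.mul hre').add (him'.mul him')
      have hfun : Q = fun (s:ℝ) => (q ((s:ℂ)*z)).re * (q ((s:ℂ)*z)).re
          + (q ((s:ℂ)*z)).im * (q ((s:ℂ)*z)).im := by
        funext s
        simp [hQdef, Complex.normSq_apply]
      have hQ' : HasDerivAt Q
          ((z * deriv q w).re * (q ((t:ℂ)*z)).re + (q ((t:ℂ)*z)).re * (z * deriv q w).re
            + ((z * deriv q w).im * (q ((t:ℂ)*z)).im + (q ((t:ℂ)*z)).im * (z * deriv q w).im)) t := by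
        rw [hfun]
        exact hsum
      have hval : (z * deriv q w).re * (q ((t:ℂ)*z)).re + (q ((t:ℂ)*z)).re * (z * deriv q w).re
            + ((z * deriv q w).im * (q ((t:ℂ)*z)).im + (q ((t:ℂ)*z)).im * (z * deriv q w).im)
          = 2 * t⁻¹ * ((p w - 1).re * Q t) := by
        rw [hkey]
        simp only [Complex.smul_re, Complex.smul_im, Complex.mul_re, Complex.mul_im,
          hQdef, Complex.normSq_apply, smul_eq_mul, hwdef, Complex.sub_re, Complex.sub_im,
          Complex.one_re, Complex.one_im]
        ring
      rw [hval] at hQ'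
      exact hQ'
    -- derivative of F
    have hpoly : HasDerivAt (fun s : ℝ => (1 - s*r)^4) (4*(1 - t*r)^3 * (0 - 1*r)) t := by
      have : HasDerivAt (fun s : ℝ => 1 - s*r) (0 - 1*r) t :=
        (hasDerivAt_const t 1).sub ((hasDerivAt_id t).mul_const r)
      have h2 := this.fun_pow 4
      simpa using h2
    exact hQd.mul hpoly
  -- F' ≤ 0 on Ioo
  have hFle : ∀ t ∈ Ioo (0:ℝ) 1, deriv F t ≤ 0 := by
    intro t ht
    rw [(hFderiv t ht).deriv]
    have hw : (t:ℂ)*z ∈ ball (0:ℂ) 1 := hmem t ⟨ht.1.le, ht.2.le⟩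
    have habsw : ‖(t:ℂ)*z‖ = t*r := by
      rw [norm_mul, Complex.norm_real, Real.norm_eq_abs, _root_.abs_of_nonneg ht.1.le, hrdef]
    have hcar := (carath _ hw).2
    rw [habsw] at hcar
    have hQ0 : 0 ≤ Q t := Complex.normSq_nonneg _
    have hre_le : (p ((t:ℂ)*z) - 1).re ≤ ‖p ((t:ℂ)*z) - 1‖ := Complex.re_le_norm _
    have hτ : 0 < 1 - t*r := by nlinarith [ht.2, ht.1]
    have ht0 : 0 < t := ht.1
    have hb : (p ((t:ℂ)*z) - 1).re * (1 - t*r) ≤ 2*(t*r) := by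
      have := mul_le_mul_of_nonneg_right hre_le hτ.le
      linarith [hcar]
    have key2 : 2*t⁻¹*((p ((t:ℂ)*z) - 1).re * Q t)*(1-t*r)^4
        ≤ 4*r*(Q t)*(1-t*r)^3 := by
      have e1 : 2*t⁻¹*((p ((t:ℂ)*z) - 1).re * Q t)*(1-t*r)^4
          = (2*t⁻¹*(Q t)*(1-t*r)^3) * ((p ((t:ℂ)*z) - 1).re*(1-t*r)) := by ring
      have hc0 : (0:ℝ) ≤ 2*t⁻¹*(Q t)*(1-t*r)^3 := by positivity
      have e2 := mul_le_mul_of_nonneg_left hb hc0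
      have e3 : (2*t⁻¹*(Q t)*(1-t*r)^3) * (2*(t*r)) = 4*r*(Q t)*(1-t*r)^3 * (t⁻¹*t) := by
        ring
      rw [inv_mul_cancel₀ (ne_of_gt ht0), mul_one] at e3
      rw [e1]
      linarith [e2, e3.le, e3.ge]
    nlinarith [key2]
  -- antitone
  have hanti : AntitoneOn F (Icc 0 1) := by
    apply antitoneOn_of_deriv_nonpos (convex_Icc 0 1) hFc
    · rw [interior_Icc]
      intro t ht
      exact (hFderiv t ht).differentiableAt.differentiableWithinAt
    · rw [interior_Icc]
      intro t ht
      exact hFle t ht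
  have hF10 : F 1 ≤ F 0 :=
    hanti (left_mem_Icc.2 zero_le_one) (right_mem_Icc.2 zero_le_one) zero_le_one
  have hF0 : F 0 = 1 := by
    simp [hFdef, hQdef, q0]
  have hF1 : F 1 = Complex.normSq (q z) * (1-r)^4 := by
    simp [hFdef, hQdef]
  have hgrow : Complex.normSq (q z) * (1-r)^4 ≤ 1 := by
    have := hF10
    rw [hF0, hF1] at this
    exact this
  have hqz : ‖q z‖ * (1-r)^2 ≤ 1 := by
    have h2 : (‖q z‖ * (1-r)^2)^2 ≤ 1 := by
      calc (‖q z‖ * (1-r)^2)^2 = Complex.normSq (q z) * (1-r)^4 := by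
            rw [← Complex.sq_norm]; ring
        _ ≤ 1 := hgrow
    nlinarith [mul_nonneg (norm_nonneg (q z)) (sq_nonneg (1-r))]
  have hpz := (carath z hz).1
  rw [← hrdef] at hpz
  have habs_eq : ‖deriv h z‖ = ‖p z‖ * ‖q z‖ := by
    rw [hpq z hz, norm_mul]
  rw [habs_eq]
  calc ‖p z‖ * ‖q z‖ * (1-r)^3
      = (‖p z‖*(1-r)) * (‖q z‖*(1-r)^2) := by ring
    _ ≤ (1+r)*1 := by
        apply mul_le_mul hpz hqz
          (mul_nonneg (norm_nonneg _) (sq_nonneg _)) (by linarith)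
    _ = 1+r := by ring


open Metric Set

theorem stmt8
    (h g : ℂ → ℂ) (α : ℝ) (hα : α ∈ Set.Ico (0:ℝ) 1)
    (hd : DifferentiableOn ℂ h (Metric.ball (0:ℂ) 1))
    (gd : DifferentiableOn ℂ g (Metric.ball (0:ℂ) 1))
    (h0 : h 0 = 0) (h1 : deriv h 0 = 1) (g0 : g 0 = 0)
    (hb1 : ‖deriv g 0‖ = α)
    (hsp : ∀ z ∈ Metric.ball (0:ℂ) 1, ‖deriv g z‖ < ‖deriv h z‖)
    (hinj : Set.InjOn h (Metric.ball (0:ℂ) 1))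
    (hstar : ∀ w ∈ h '' (Metric.ball (0:ℂ) 1), segment ℝ 0 w ⊆ h '' (Metric.ball (0:ℂ) 1))
 :
    ∀ z ∈ Metric.ball (0:ℂ) 1,
      ‖deriv g z‖
        ≤ (α + ‖z‖) * (1 + ‖z‖) / ((1 + α * ‖z‖) * (1 - ‖z‖) ^ 3) := by
  intro z hz
  have hα0 : 0 ≤ α := hα.1
  set r : ℝ := ‖z‖ with hrdef
  have hr1 : r < 1 := mem_ball_zero_iff.1 hz
  have hr0 : 0 ≤ r := norm_nonneg _
  have hprime : ∀ w ∈ ball (0:ℂ) 1, deriv h w ≠ 0 := by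
    intro w hw hc
    have := hsp w hw
    rw [hc] at this
    simp at this
    exact absurd this (not_lt.2 (norm_nonneg _))
  -- Schwarz-Pick part
  have derivdg : DifferentiableOn ℂ (deriv g) (ball 0 1) :=
    ((gd.analyticOnNhd isOpen_ball).deriv).differentiableOn
  have derivdh : DifferentiableOn ℂ (deriv h) (ball 0 1) :=
    ((hd.analyticOnNhd isOpen_ball).deriv).differentiableOn
  set ω : ℂ → ℂ := fun w => deriv g w / deriv h w with hωdef
  have ωd : DifferentiableOn ℂ ω (ball 0 1) := derivdg.div derivdh hprime
  have hm : ∀ w ∈ ball (0:ℂ) 1, ‖ω w‖ < 1 := by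
    intro w hw
    rw [hωdef]
    show ‖deriv g w / deriv h w‖ < 1
    rw [norm_div, div_lt_one (by
      have := hsp w hw
      have h2 := norm_nonneg (deriv g w)
      linarith)]
    exact hsp w hw
  have hω0 : ‖ω 0‖ = α := by
    rw [hωdef]
    show ‖deriv g 0 / deriv h 0‖ = α
    rw [h1, div_one, hb1]
  have hsp2 := aux_sp ωd hm hz
  rw [hω0] at hsp2
  have hdist := aux_distortion hd h0 h1 hprime hinj hstar hz
  rw [← hrdef] at hdist hsp2
  -- combine
  have hgz : ‖deriv g z‖ = ‖ω z‖ * ‖deriv h z‖ := by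
    rw [hωdef]
    show ‖deriv g z‖ = ‖deriv g z / deriv h z‖ * ‖deriv h z‖
    have hne : ‖deriv h z‖ ≠ 0 := norm_ne_zero_iff.2 (hprime z hz)
    rw [norm_div]
    exact (div_mul_cancel₀ _ hne).symm
  have hden : 0 < (1 + α * r) * (1 - r)^3 := by
    have ha : 0 < 1 + α * r := by nlinarith
    have h2 : 0 < (1 - r)^3 := pow_pos (by linarith) 3
    exact mul_pos ha h2
  rw [le_div_iff₀ hden, hgz]
  have e1 : ‖ω z‖ * ‖deriv h z‖ * ((1 + α * r) * (1 - r)^3)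
      = (‖ω z‖ * (1 + α * r)) * (‖deriv h z‖ * (1 - r)^3) := by
    ring
  rw [e1]
  apply mul_le_mul hsp2 hdist
  · exact mul_nonneg (norm_nonneg _) (pow_nonneg (by linarith) 3)
  · linarith
end
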